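/- For every cubic graph G, ν₃(G) ≥ (7/6)·|V(G)|. -/

import Mathlib

/-- A multigraph on vertex type `V` with edge type `E`: each edge has a pair of
endpoints (an element of `Sym2 V`), and there are no loops.  Multiple edges
(distinct edges with the same endpoints) are allowed. -/
structure Multigraph (V : Type) (E : Type) where
  ends : E → Sym2 V
  no_loops : ∀ e : E, ¬ (ends e).IsDiag

namespace Multigraph

variable {V E : Type}

/-- The degree of a vertex `v` inside the set `S` of edges:
the number of edges of `S` incident to `v`. -/
noncomputable def degreeIn (G : Multigraph V E) (S : Set E) (v : V) : ℕ :=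
  {e ∈ S | v ∈ G.ends e}.ncard

/-- The degree of a vertex: the number of edges incident to it. -/
noncomputable def degree (G : Multigraph V E) (v : V) : ℕ :=
  G.degreeIn Set.univ v

/-- A cubic graph: every vertex has degree exactly `3`. -/
def IsCubic (G : Multigraph V E) : Prop :=
  ∀ v : V, G.degree v = 3

/-- Two edges are adjacent if they share an endpoint. -/
def EdgeAdj (G : Multigraph V E) (e f : E) : Prop :=
  ∃ v : V, v ∈ G.ends e ∧ v ∈ G.ends f

/-- A set of edges is a matching if no two distinct edges of it share an endpoint. -/
def IsMatching (G : Multigraph V E) (M : Set E) : Prop :=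
  ∀ e ∈ M, ∀ f ∈ M, e ≠ f → ¬ G.EdgeAdj e f

/-- A perfect matching (`1`-factor): a matching covering every vertex. -/
def IsPerfectMatching (G : Multigraph V E) (F : Set E) : Prop :=
  G.IsMatching F ∧ ∀ v : V, ∃ e ∈ F, v ∈ G.ends e

/-- A `2`-factor: a spanning subgraph in which every vertex has degree exactly `2`. -/
def Is2Factor (G : Multigraph V E) (F : Set E) : Prop :=
  ∀ v : V, G.degreeIn F v = 2

/-- `c` is a proper edge coloring of the (spanning) subgraph with edge set `S`:
distinct adjacent edges of `S` get distinct colors. -/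
def IsProperColoring (G : Multigraph V E) (S : Set E) {k : ℕ} (c : E → Fin k) : Prop :=
  ∀ e ∈ S, ∀ f ∈ S, e ≠ f → G.EdgeAdj e f → c e ≠ c f

/-- The (spanning) subgraph with edge set `S` is `k`-edge-colorable. -/
def Colorable (G : Multigraph V E) (k : ℕ) (S : Set E) : Prop :=
  ∃ c : E → Fin k, G.IsProperColoring S c

/-- `H` is (the edge set of) a maximum `k`-edge-colorable subgraph of `G`. -/
def IsMaxColorable (G : Multigraph V E) (k : ℕ) (H : Set E) : Prop :=
  G.Colorable k H ∧ ∀ S : Set E, G.Colorable k S → S.ncard ≤ H.ncard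

/-- `ν_k(G)`: the number of edges of a maximum `k`-edge-colorable subgraph of `G`. -/
noncomputable def nu (G : Multigraph V E) (k : ℕ) : ℕ :=
  sSup {n : ℕ | ∃ S : Set E, G.Colorable k S ∧ S.ncard = n}

/-- The set of colors appearing (under the coloring `c` of the subgraph `H`)
on the edges of `H` incident to the vertex `w`. -/
def colorsAt (G : Multigraph V E) (H : Set E) {k : ℕ} (c : E → Fin k) (w : V) :
    Set (Fin k) :=
  {γ : Fin k | ∃ f ∈ H, w ∈ G.ends f ∧ c f = γ}

end Multigraph

set_option linter.unusedSectionVars false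
set_option maxHeartbeats 1000000

namespace NuAux
open Multigraph Finset

variable {V E : Type} [DecidableEq V] [DecidableEq E] [Fintype V] [Fintype E]
variable (G : Multigraph V E)

lemma two_ends (e : E) : ∃ u v : V, u ≠ v ∧ G.ends e = s(u, v) := by
  have hz := G.no_loops e
  revert hz
  induction (G.ends e) using Sym2.inductionOn with
  | hf u v => exact fun hz => ⟨u, v, fun h => hz (Sym2.mk_isDiag_iff.mpr h), rfl⟩

lemma other_end {e : E} {v : V} (hv : v ∈ G.ends e) :
    ∃ w : V, w ≠ v ∧ G.ends e = s(v, w) := by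
  obtain ⟨u, w, huw, h⟩ := two_ends G e
  rw [h, Sym2.mem_iff] at hv
  rcases hv with rfl | rfl
  · exact ⟨w, fun hh => huw hh.symm, h⟩
  · exact ⟨u, huw, by rw [h, Sym2.eq_swap]⟩

noncomputable def endsF (e : E) : Finset V := by
  classical exact Finset.univ.filter (fun v => v ∈ G.ends e)

@[simp] lemma mem_endsF {e : E} {v : V} : v ∈ endsF G e ↔ v ∈ G.ends e := by
  classical simp [endsF]

lemma endsF_card (e : E) : (endsF G e).card = 2 := by
  classical
  obtain ⟨u, v, huv, h⟩ := two_ends G e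
  have : endsF G e = {u, v} := by
    ext x; simp [endsF, h, Sym2.mem_iff]
  rw [this, Finset.card_insert_of_notMem (by simp [huv]), Finset.card_singleton]

noncomputable def edgesAt (S : Finset E) (v : V) : Finset E := by
  classical exact S.filter (fun e => v ∈ G.ends e)

@[simp] lemma mem_edgesAt {S : Finset E} {v : V} {e : E} :
    e ∈ edgesAt G S v ↔ e ∈ S ∧ v ∈ G.ends e := by classical simp [edgesAt]

lemma edgesAt_mono {S T : Finset E} (h : S ⊆ T) (v : V) :
    edgesAt G S v ⊆ edgesAt G T v := by
  intro e he; rw [mem_edgesAt] at *; exact ⟨h he.1, he.2⟩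

lemma degreeIn_eq (S : Finset E) (v : V) :
    G.degreeIn ↑S v = (edgesAt G S v).card := by
  classical
  have h : {e ∈ (↑S : Set E) | v ∈ G.ends e} = ↑(edgesAt G S v) := by
    ext e; simp [edgesAt]
  rw [degreeIn, h, Set.ncard_coe_finset]

lemma handshake (S : Finset E) :
    ∑ v : V, (edgesAt G S v).card = 2 * S.card := by
  classical
  have h1 : ∀ v : V, (edgesAt G S v).card = ∑ e ∈ S, if v ∈ G.ends e then 1 else 0 := by
    intro v; rw [edgesAt]; classical rw [Finset.card_filter]
  simp only [h1]
  rw [Finset.sum_comm]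
  have h2 : ∀ e ∈ S, (∑ v : V, if v ∈ G.ends e then 1 else 0) = 2 := by
    intro e _
    have : (∑ v : V, if v ∈ G.ends e then 1 else 0) = (endsF G e).card := by
      classical rw [endsF, Finset.card_filter]
    rw [this, endsF_card]
  rw [Finset.sum_congr rfl h2, Finset.sum_const, smul_eq_mul, mul_comm]

/-- In a cubic graph, every vertex has exactly 3 edges. -/
lemma edgesAt_univ_card (hG : G.IsCubic) (v : V) :
    (edgesAt G Finset.univ v).card = 3 := by
  have := hG v
  rwa [degree, ← Finset.coe_univ, degreeIn_eq] at this

lemma edgesAt_card_le (hG : G.IsCubic) (S : Finset E) (v : V) :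
    (edgesAt G S v).card ≤ 3 := by
  rw [← edgesAt_univ_card G hG v]
  exact Finset.card_le_card (edgesAt_mono G (Finset.subset_univ S) v)

/-! ### Colors at a vertex -/

noncomputable def colorsF (S : Finset E) (c : E → Fin 3) (v : V) : Finset (Fin 3) :=
  (edgesAt G S v).image c

lemma mem_colorsF {S : Finset E} {c : E → Fin 3} {v : V} {γ : Fin 3} :
    γ ∈ colorsF G S c v ↔ ∃ e ∈ S, v ∈ G.ends e ∧ c e = γ := by
  simp [colorsF, mem_edgesAt, and_assoc]

lemma colorsF_mono {S T : Finset E} (h : S ⊆ T) (c : E → Fin 3) (v : V) :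
    colorsF G S c v ⊆ colorsF G T c v :=
  Finset.image_subset_image (edgesAt_mono G h v)

lemma proper_mono {S T : Set E} (h : S ⊆ T) {c : E → Fin 3}
    (hc : G.IsProperColoring T c) : G.IsProperColoring S c :=
  fun e he f hf hef hadj => hc e (h he) f (h hf) hef hadj

lemma card_colorsF {S : Finset E} {c : E → Fin 3} (hc : G.IsProperColoring ↑S c) (v : V) :
    (colorsF G S c v).card = (edgesAt G S v).card := by
  rw [colorsF]
  apply Finset.card_image_of_injOn
  intro e he f hf hef
  by_contra hne
  rw [mem_coe, mem_edgesAt] at he hf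
  exact hc e he.1 f hf.1 hne ⟨v, he.2, hf.2⟩ hef

/-- at most one edge of a given color at a vertex -/
lemma color_unique {S : Finset E} {c : E → Fin 3} (hc : G.IsProperColoring ↑S c)
    {v : V} {e f : E} (he : e ∈ S) (hve : v ∈ G.ends e) (hf : f ∈ S) (hvf : v ∈ G.ends f)
    (hcc : c e = c f) : e = f := by
  by_contra hne
  exact hc e he f hf hne ⟨v, hve, hvf⟩ hcc

lemma exists_missing {S : Finset E} {c : E → Fin 3} (hc : G.IsProperColoring ↑S c)
    {v : V} (hd : (edgesAt G S v).card ≤ 2) : ∃ ζ : Fin 3, ζ ∉ colorsF G S c v := by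
  by_contra h
  push_neg at h
  have : colorsF G S c v = Finset.univ := Finset.eq_univ_iff_forall.mpr h
  have h3 : (colorsF G S c v).card = 3 := by rw [this]; simp
  rw [card_colorsF G hc] at h3
  omega

lemma missing_unique {S : Finset E} {c : E → Fin 3} (hc : G.IsProperColoring ↑S c)
    {v : V} (hd : (edgesAt G S v).card = 2) {γ₁ γ₂ : Fin 3}
    (h1 : γ₁ ∉ colorsF G S c v) (h2 : γ₂ ∉ colorsF G S c v) : γ₁ = γ₂ := by
  by_contra hne
  have hsub : colorsF G S c v ∪ {γ₁, γ₂} ⊆ Finset.univ := Finset.subset_univ _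
  have hdisj : Disjoint (colorsF G S c v) {γ₁, γ₂} := by
    rw [Finset.disjoint_right]
    intro a ha
    rw [Finset.mem_insert, Finset.mem_singleton] at ha
    rcases ha with rfl | rfl <;> assumption
  have hcard := Finset.card_le_card hsub
  rw [Finset.card_union_of_disjoint hdisj, card_colorsF G hc, hd] at hcard
  have : ({γ₁, γ₂} : Finset (Fin 3)).card = 2 := by
    rw [Finset.card_insert_of_notMem (by simp [hne]), Finset.card_singleton]
  rw [this] at hcard
  simp at hcard

/-- Extending a proper coloring to an uncovered edge whose ends both miss `ζ`. -/
lemma extend_proper {S : Finset E} {c : E → Fin 3} (hc : G.IsProperColoring ↑S c)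
    {e : E} (he : e ∉ S) {ζ : Fin 3}
    (hζ : ∀ x, x ∈ G.ends e → ζ ∉ colorsF G S c x) :
    G.IsProperColoring ↑(insert e S) (Function.update c e ζ) := by
  intro f hf g hg hfg hadj
  rw [mem_coe, Finset.mem_insert] at hf hg
  rcases hf with rfl | hf
  · rcases hg with rfl | hg
    · exact absurd rfl hfg
    · obtain ⟨x, hxf, hxg⟩ := hadj
      have hgne : g ≠ f := fun h => he (h ▸ hg)
      rw [Function.update_self, Function.update_of_ne hgne]
      intro h
      exact hζ x hxf (mem_colorsF G |>.mpr ⟨g, hg, hxg, h.symm⟩)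
  · rcases hg with rfl | hg
    · obtain ⟨x, hxf, hxg⟩ := hadj
      have hfne : f ≠ g := fun h => he (h ▸ hf)
      rw [Function.update_self, Function.update_of_ne hfne]
      intro h
      exact hζ x hxg (mem_colorsF G |>.mpr ⟨f, hf, hxf, h⟩)
    · have hfne : f ≠ e := fun h => he (h ▸ hf)
      have hgne : g ≠ e := fun h => he (h ▸ hg)
      rw [Function.update_of_ne hfne, Function.update_of_ne hgne]
      exact hc f hf g hg hfg hadj

lemma fin3_complete {a b : Fin 3} (hab : a ≠ b) :
    ∃ c : Fin 3, c ≠ a ∧ c ≠ b ∧ ∀ x : Fin 3, x = a ∨ x = b ∨ x = c := by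
  revert hab; revert a b; decide

/-! ### Kempe chain machinery -/

lemma edgeAdj_symm {e f : E} (h : G.EdgeAdj e f) : G.EdgeAdj f e := by
  obtain ⟨v, h1, h2⟩ := h; exact ⟨v, h2, h1⟩

section Swap

variable (S : Finset E) (c : E → Fin 3) (δ ε : Fin 3)

noncomputable def Dset : Finset E := by
  classical exact S.filter (fun g => c g = δ ∨ c g = ε)

@[simp] lemma mem_Dset {g : E} : g ∈ Dset S c δ ε ↔ g ∈ S ∧ (c g = δ ∨ c g = ε) := by
  classical simp [Dset]

def stepRel (g h : E) : Prop :=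
  g ∈ Dset S c δ ε ∧ h ∈ Dset S c δ ε ∧ G.EdgeAdj g h

def Reach (g₀ g : E) : Prop := Relation.ReflTransGen (stepRel G S c δ ε) g₀ g

lemma reach_mem {g₀ g : E} (h0 : g₀ ∈ Dset S c δ ε) (h : Reach G S c δ ε g₀ g) :
    g ∈ Dset S c δ ε := by
  induction h with
  | refl => exact h0
  | tail _ hstep _ => exact hstep.2.1

lemma reach_extend {g₀ g h : E} (hr : Reach G S c δ ε g₀ g) (h0 : g₀ ∈ Dset S c δ ε)
    (hD : h ∈ Dset S c δ ε) (hadj : G.EdgeAdj g h) : Reach G S c δ ε g₀ h :=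
  hr.tail ⟨reach_mem G S c δ ε h0 hr, hD, hadj⟩

def flipc : Fin 3 → Fin 3 := fun x => if x = δ then ε else if x = ε then δ else x

lemma flipc_flipc (x : Fin 3) : flipc δ ε (flipc δ ε x) = x := by
  unfold flipc; split_ifs <;> simp_all

lemma flipc_inj : Function.Injective (flipc δ ε) :=
  Function.LeftInverse.injective (flipc_flipc δ ε)

lemma flipc_pair {x : Fin 3} (h : x = δ ∨ x = ε) :
    flipc δ ε x = δ ∨ flipc δ ε x = ε := by
  unfold flipc; rcases h with rfl | rfl <;> split_ifs <;> simp_all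

lemma flipc_fix {x : Fin 3} (h1 : x ≠ δ) (h2 : x ≠ ε) : flipc δ ε x = x := by
  unfold flipc; split_ifs <;> simp_all

lemma flipc_delta : flipc δ ε δ = ε := by simp [flipc]

lemma flipc_eps (hne : δ ≠ ε) : flipc δ ε ε = δ := by
  unfold flipc; split_ifs <;> simp_all

noncomputable def swapc (g₀ : E) : E → Fin 3 := by
  classical exact fun g => if Reach G S c δ ε g₀ g then flipc δ ε (c g) else c g

lemma swapc_reach {g₀ g : E} (h : Reach G S c δ ε g₀ g) :
    swapc G S c δ ε g₀ g = flipc δ ε (c g) := by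
  classical unfold swapc; rw [if_pos h]

lemma swapc_not_reach {g₀ g : E} (h : ¬ Reach G S c δ ε g₀ g) :
    swapc G S c δ ε g₀ g = c g := by
  classical unfold swapc; rw [if_neg h]

lemma swap_proper {g₀ : E} (hc : G.IsProperColoring ↑S c) (h0 : g₀ ∈ Dset S c δ ε) :
    G.IsProperColoring ↑S (swapc G S c δ ε g₀) := by
  have key : ∀ f ∈ S, ∀ g ∈ S, f ≠ g → G.EdgeAdj f g → Reach G S c δ ε g₀ f →
      ¬ Reach G S c δ ε g₀ g →
      swapc G S c δ ε g₀ f ≠ swapc G S c δ ε g₀ g := by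
    intro f hf g hg hfg hadj hrf hrg
    rw [swapc_reach G S c δ ε hrf, swapc_not_reach G S c δ ε hrg]
    have hgD : g ∉ Dset S c δ ε := by
      intro hgD
      exact hrg (reach_extend G S c δ ε hrf h0 hgD hadj)
    rw [mem_Dset] at hgD
    push_neg at hgD
    have hfD := reach_mem G S c δ ε h0 hrf
    rw [mem_Dset] at hfD
    rcases flipc_pair δ ε hfD.2 with h | h <;> rw [h]
    · exact fun hh => (hgD hg).1 hh.symm
    · exact fun hh => (hgD hg).2 hh.symm
  intro f hf g hg hfg hadj
  rw [mem_coe] at hf hg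
  by_cases hrf : Reach G S c δ ε g₀ f <;> by_cases hrg : Reach G S c δ ε g₀ g
  · rw [swapc_reach G S c δ ε hrf, swapc_reach G S c δ ε hrg]
    exact fun h => hc f hf g hg hfg hadj (flipc_inj δ ε h)
  · exact key f hf g hg hfg hadj hrf hrg
  · exact fun h => key g hg f hf (Ne.symm hfg) (edgeAdj_symm G hadj) hrg hrf h.symm
  · rw [swapc_not_reach G S c δ ε hrf, swapc_not_reach G S c δ ε hrg]
    exact hc f hf g hg hfg hadj

lemma swap_colors_untouched {g₀ : E} {v : V}
    (hv : ∀ g, Reach G S c δ ε g₀ g → v ∉ G.ends g) :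
    colorsF G S (swapc G S c δ ε g₀) v = colorsF G S c v := by
  unfold colorsF
  apply Finset.image_congr
  intro e he
  rw [mem_coe, mem_edgesAt] at he
  apply swapc_not_reach
  intro hr
  exact hv e hr he.2

lemma swap_colors_all {g₀ : E} {v : V} (h0 : g₀ ∈ Dset S c δ ε)
    (hv : ∀ g ∈ S, v ∈ G.ends g → (c g = δ ∨ c g = ε) → Reach G S c δ ε g₀ g) :
    colorsF G S (swapc G S c δ ε g₀) v = (colorsF G S c v).image (flipc δ ε) := by
  unfold colorsF
  rw [Finset.image_image]
  apply Finset.image_congr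
  intro e he
  rw [mem_coe, mem_edgesAt] at he
  by_cases hD : c e = δ ∨ c e = ε
  · rw [swapc_reach G S c δ ε (hv e he.1 he.2 hD)]; rfl
  · push_neg at hD
    have : ¬ Reach G S c δ ε g₀ e := by
      intro hr
      have := reach_mem G S c δ ε h0 hr
      rw [mem_Dset] at this
      rcases this.2 with h | h
      exacts [hD.1 h, hD.2 h]
    rw [swapc_not_reach G S c δ ε this, Function.comp_apply, flipc_fix δ ε hD.1 hD.2]

end Swap

/-- Kempe-chain forcing: if `e = uv` is uncovered, `α` is missing at `u`, `β` is missing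
at `v`, and `g₀` is an edge at `u` colored `β`, then the `{α,β}`-chain from `g₀`
reaches `v`; otherwise swapping it would let us enlarge the colorable subgraph. -/
lemma forced_reach {S : Finset E} {c : E → Fin 3} (hc : G.IsProperColoring ↑S c)
    (hmax : ∀ T : Finset E, G.Colorable 3 ↑T → T.card ≤ S.card)
    {e : E} {u v : V} (he : e ∉ S) (hends : G.ends e = s(u, v)) {α β : Fin 3}
    (hαβ : α ≠ β) (hαu : α ∉ colorsF G S c u) (hβv : β ∉ colorsF G S c v)
    {g₀ : E} (hg₀ : g₀ ∈ S) (hg₀u : u ∈ G.ends g₀) (hc₀ : c g₀ = β) :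
    ∃ h, Reach G S c α β g₀ h ∧ v ∈ G.ends h := by
  by_contra hno
  push_neg at hno
  have h0 : g₀ ∈ Dset S c α β := by simp [hg₀, hc₀]
  set c' := swapc G S c α β g₀ with hc'def
  have hc' : G.IsProperColoring ↑S c' := swap_proper G S c α β hc h0
  have hu : colorsF G S c' u = (colorsF G S c u).image (flipc α β) := by
    apply swap_colors_all G S c α β h0
    intro g hg hgu hpair
    rcases hpair with h | h
    · exact absurd (mem_colorsF G |>.mpr ⟨g, hg, hgu, h⟩) hαu
    · have : g = g₀ := color_unique G hc hg hgu hg₀ hg₀u (by rw [h, hc₀])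
      exact this ▸ Relation.ReflTransGen.refl
  have hβu' : β ∉ colorsF G S c' u := by
    rw [hu]
    intro hmem
    rw [Finset.mem_image] at hmem
    obtain ⟨x, hx, hfx⟩ := hmem
    have h2 := congrArg (flipc α β) hfx
    rw [flipc_flipc, flipc_eps α β hαβ] at h2
    exact hαu (h2 ▸ hx)
  have hv' : colorsF G S c' v = colorsF G S c v := by
    apply swap_colors_untouched
    intro g hr hgv
    exact hno g hr hgv
  have hβv' : β ∉ colorsF G S c' v := by rw [hv']; exact hβv
  have hext : G.IsProperColoring ↑(insert e S) (Function.update c' e β) := by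
    apply extend_proper G hc' he
    intro x hx
    rw [hends, Sym2.mem_iff] at hx
    rcases hx with rfl | rfl
    exacts [hβu', hβv']
  have hcard := hmax _ ⟨_, hext⟩
  rw [Finset.card_insert_of_notMem he] at hcard
  omega

/-! ### Components of two-colored subgraphs: vertex/edge counts -/

section Count

variable (S : Finset E) (c : E → Fin 3) (δ ε : Fin 3)

def chainN (g₀ : E) : ℕ → E → Prop
  | 0, g => g = g₀
  | n+1, g => ∃ h, chainN g₀ n h ∧ stepRel G S c δ ε h g

lemma chainN_reach {g₀ g : E} {n : ℕ} (h : chainN G S c δ ε g₀ n g) :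
    Reach G S c δ ε g₀ g := by
  induction n generalizing g with
  | zero => rw [chainN] at h; subst h; exact Relation.ReflTransGen.refl
  | succ n ih =>
    obtain ⟨h', h1, h2⟩ := h
    exact (ih h1).tail h2

lemma reach_chainN {g₀ g : E} (h : Reach G S c δ ε g₀ g) :
    ∃ n, chainN G S c δ ε g₀ n g := by
  induction h with
  | refl => exact ⟨0, rfl⟩
  | tail _ hstep ih =>
    obtain ⟨n, hn⟩ := ih
    exact ⟨n + 1, _, hn, hstep⟩

noncomputable def rdist (g₀ g : E) : ℕ := by
  classical
  exact if h : Reach G S c δ ε g₀ g then Nat.find (reach_chainN G S c δ ε h) else 0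

lemma rdist_chain {g₀ g : E} (h : Reach G S c δ ε g₀ g) :
    chainN G S c δ ε g₀ (rdist G S c δ ε g₀ g) g := by
  classical
  rw [rdist, dif_pos h]
  exact Nat.find_spec (reach_chainN G S c δ ε h)

lemma rdist_le {g₀ g : E} {n : ℕ} (h : chainN G S c δ ε g₀ n g) :
    rdist G S c δ ε g₀ g ≤ n := by
  classical
  rw [rdist, dif_pos (chainN_reach G S c δ ε h)]
  exact Nat.find_min' _ h

noncomputable def ReachSet (g₀ : E) : Finset E := by
  classical exact Finset.univ.filter (Reach G S c δ ε g₀)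

@[simp] lemma mem_ReachSet {g₀ g : E} : g ∈ ReachSet G S c δ ε g₀ ↔ Reach G S c δ ε g₀ g := by
  classical simp [ReachSet]

noncomputable def VR (g₀ : E) : Finset V := by
  classical exact Finset.univ.filter (fun x => ∃ h ∈ ReachSet G S c δ ε g₀, x ∈ G.ends h)

@[simp] lemma mem_VR {g₀ : E} {x : V} :
    x ∈ VR G S c δ ε g₀ ↔ ∃ h, Reach G S c δ ε g₀ h ∧ x ∈ G.ends h := by
  classical simp [VR]

lemma ends_eq_of_mem {h : E} {x y : V} (hx : x ∈ G.ends h) (hy : y ∈ G.ends h)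
    (hxy : x ≠ y) {z : V} (hz : z ∈ G.ends h) : z = x ∨ z = y := by
  obtain ⟨a, b, hab, hab2⟩ := two_ends G h
  rw [hab2, Sym2.mem_iff] at hx hy hz
  rcases hx with rfl | rfl <;> rcases hy with rfl | rfl <;> tauto

lemma VR_card_le {g₀ : E} : (VR G S c δ ε g₀).card ≤ (ReachSet G S c δ ε g₀).card + 1 := by
  classical
  have hex : ∀ x ∈ VR G S c δ ε g₀,
      (((ReachSet G S c δ ε g₀).filter (fun h => x ∈ G.ends h))).Nonempty := by
    intro x hx
    rw [mem_VR] at hx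
    obtain ⟨h, h1, h2⟩ := hx
    exact ⟨h, by simp [h1, h2]⟩
  have hmin : ∀ x ∈ VR G S c δ ε g₀, ∃ h ∈ (ReachSet G S c δ ε g₀).filter (fun h => x ∈ G.ends h),
      ∀ h' ∈ (ReachSet G S c δ ε g₀).filter (fun h => x ∈ G.ends h),
        rdist G S c δ ε g₀ h ≤ rdist G S c δ ε g₀ h' := by
    intro x hx
    exact Finset.exists_min_image _ _ (hex x hx)
  choose f hf1 hf2 using hmin
  have hcard : ((VR G S c δ ε g₀) \ (endsF G g₀)).card ≤ ((ReachSet G S c δ ε g₀).erase g₀).card := by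
    apply Finset.card_le_card_of_injOn (fun x => if hx : x ∈ VR G S c δ ε g₀ then f x hx else g₀)
    · intro x hx
      simp only [Finset.mem_coe, Finset.mem_sdiff] at hx ⊢
      rw [dif_pos hx.1]
      have h1 := hf1 x hx.1
      rw [Finset.mem_filter] at h1
      rw [Finset.mem_erase]
      refine ⟨?_, h1.1⟩
      intro hfx
      apply hx.2
      rw [mem_endsF, ← hfx]
      exact h1.2
    · intro x hx y hy hxy
      rw [mem_coe, Finset.mem_sdiff] at hx hy
      simp only at hxy
      rw [dif_pos hx.1, dif_pos hy.1] at hxy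
      by_contra hne
      have hxh : x ∈ G.ends (f x hx.1) := (Finset.mem_filter.mp (hf1 x hx.1)).2
      have hyh : y ∈ G.ends (f x hx.1) := by
        rw [hxy]; exact (Finset.mem_filter.mp (hf1 y hy.1)).2
      have hhR : f x hx.1 ∈ ReachSet G S c δ ε g₀ := (Finset.mem_filter.mp (hf1 x hx.1)).1
      have hreach : Reach G S c δ ε g₀ (f x hx.1) := mem_ReachSet G S c δ ε |>.mp hhR
      have hne0 : f x hx.1 ≠ g₀ := by
        intro hq
        apply hx.2
        rw [mem_endsF, ← hq]
        exact hxh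
      obtain ⟨n, hn⟩ : ∃ n, rdist G S c δ ε g₀ (f x hx.1) = n := ⟨_, rfl⟩
      have hchain := rdist_chain G S c δ ε hreach
      rw [hn] at hchain
      cases n with
      | zero => exact hne0 hchain
      | succ m =>
        obtain ⟨h', hh', hstep⟩ := hchain
        have hh'R : h' ∈ ReachSet G S c δ ε g₀ :=
          (mem_ReachSet G S c δ ε).mpr (chainN_reach G S c δ ε hh')
        have hh'd : rdist G S c δ ε g₀ h' ≤ m := rdist_le G S c δ ε hh'
        obtain ⟨z, hz1, hz2⟩ := hstep.2.2
        have hz : z = x ∨ z = y := ends_eq_of_mem G hxh hyh hne hz2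
        rcases hz with hzz | hzz
        · have hz1' : x ∈ G.ends h' := hzz ▸ hz1
          have := hf2 x hx.1 h' (by rw [Finset.mem_filter]; exact ⟨hh'R, hz1'⟩)
          rw [hn] at this
          omega
        · have hz1' : y ∈ G.ends h' := hzz ▸ hz1
          have := hf2 y hy.1 h' (by rw [Finset.mem_filter]; exact ⟨hh'R, hz1'⟩)
          rw [← hxy, hn] at this
          omega
  have h2 : (VR G S c δ ε g₀).card ≤ ((VR G S c δ ε g₀) \ (endsF G g₀)).card + 2 := by
    have hsub : VR G S c δ ε g₀ ⊆ (VR G S c δ ε g₀ \ endsF G g₀) ∪ endsF G g₀ := by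
      intro a ha
      rw [Finset.mem_union, Finset.mem_sdiff]
      by_cases h : a ∈ endsF G g₀
      · tauto
      · tauto
    calc (VR G S c δ ε g₀).card ≤ ((VR G S c δ ε g₀ \ endsF G g₀) ∪ endsF G g₀).card :=
          Finset.card_le_card hsub
      _ ≤ (VR G S c δ ε g₀ \ endsF G g₀).card + (endsF G g₀).card := Finset.card_union_le _ _
      _ = (VR G S c δ ε g₀ \ endsF G g₀).card + 2 := by rw [endsF_card]
  have h3 : g₀ ∈ ReachSet G S c δ ε g₀ := (mem_ReachSet G S c δ ε).mpr Relation.ReflTransGen.refl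
  have h4 := Finset.card_erase_of_mem h3
  have h5 := Finset.card_pos.mpr ⟨g₀, h3⟩
  calc (VR G S c δ ε g₀).card ≤ ((VR G S c δ ε g₀) \ (endsF G g₀)).card + 2 := h2
    _ ≤ ((ReachSet G S c δ ε g₀).erase g₀).card + 2 := Nat.add_le_add_right hcard 2
    _ ≤ (ReachSet G S c δ ε g₀).card + 1 := by omega

lemma Dset_deg_le_two (hc : G.IsProperColoring ↑S c) (x : V) :
    (edgesAt G (Dset S c δ ε) x).card ≤ 2 := by
  classical
  have hinj : Set.InjOn c ↑(edgesAt G (Dset S c δ ε) x) := by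
    intro e he f hf hef
    rw [mem_coe, mem_edgesAt, mem_Dset] at he hf
    exact color_unique G hc he.1.1 he.2 hf.1.1 hf.2 hef
  have himage := Finset.card_image_of_injOn hinj
  have hsub : (edgesAt G (Dset S c δ ε) x).image c ⊆ {δ, ε} := by
    intro γ hγ
    rw [Finset.mem_image] at hγ
    obtain ⟨e, he, rfl⟩ := hγ
    rw [mem_edgesAt, mem_Dset] at he
    rcases he.1.2 with h | h <;> simp [h]
  calc (edgesAt G (Dset S c δ ε) x).card = ((edgesAt G (Dset S c δ ε) x).image c).card :=
        himage.symm
    _ ≤ ({δ, ε} : Finset (Fin 3)).card := Finset.card_le_card hsub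
    _ ≤ 2 := by
        apply le_trans (Finset.card_insert_le δ {ε})
        simp

lemma leaf_bound (hc : G.IsProperColoring ↑S c) {g₀ : E} (h0 : g₀ ∈ Dset S c δ ε) :
    ((VR G S c δ ε g₀).filter (fun x => (edgesAt G (Dset S c δ ε) x).card = 1)).card ≤ 2 := by
  classical
  have hRD : ∀ x ∈ VR G S c δ ε g₀,
      edgesAt G (ReachSet G S c δ ε g₀) x = edgesAt G (Dset S c δ ε) x := by
    intro x hx
    apply Finset.Subset.antisymm
    · apply edgesAt_mono
      intro h hh
      rw [mem_ReachSet] at hh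
      exact reach_mem G S c δ ε h0 hh
    · intro h hh
      rw [mem_edgesAt] at hh ⊢
      refine ⟨?_, hh.2⟩
      rw [mem_ReachSet]
      rw [mem_VR] at hx
      obtain ⟨h', hr', hx'⟩ := hx
      exact reach_extend G S c δ ε hr' h0 hh.1 ⟨x, hx', hh.2⟩
  have hsum : ∑ x ∈ VR G S c δ ε g₀, (edgesAt G (ReachSet G S c δ ε g₀) x).card
      = 2 * (ReachSet G S c δ ε g₀).card := by
    rw [← handshake G (ReachSet G S c δ ε g₀)]
    apply Finset.sum_subset (Finset.subset_univ _)
    intro x _ hx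
    rw [Finset.card_eq_zero, Finset.eq_empty_iff_forall_notMem]
    intro h hh
    rw [mem_edgesAt] at hh
    apply hx
    rw [mem_VR]
    exact ⟨h, (mem_ReachSet G S c δ ε).mp hh.1, hh.2⟩
  have hsum2 : ∑ x ∈ VR G S c δ ε g₀, (edgesAt G (Dset S c δ ε) x).card
      = 2 * (ReachSet G S c δ ε g₀).card := by
    rw [← hsum]
    exact Finset.sum_congr rfl (fun x hx => by rw [hRD x hx])
  set W := VR G S c δ ε g₀ with hW
  set L := W.filter (fun x => (edgesAt G (Dset S c δ ε) x).card = 1) with hL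
  have hsplit : ∑ x ∈ L, (edgesAt G (Dset S c δ ε) x).card
      + ∑ x ∈ W.filter (fun x => ¬ (edgesAt G (Dset S c δ ε) x).card = 1),
        (edgesAt G (Dset S c δ ε) x).card
      = ∑ x ∈ W, (edgesAt G (Dset S c δ ε) x).card := by
    rw [hL]
    exact Finset.sum_filter_add_sum_filter_not W _ _
  have hLsum : ∑ x ∈ L, (edgesAt G (Dset S c δ ε) x).card = L.card := by
    rw [Finset.sum_congr rfl (fun x hx => (Finset.mem_filter.mp hx).2)]
    simp [hL]
  have hrest : ∑ x ∈ W.filter (fun x => ¬ (edgesAt G (Dset S c δ ε) x).card = 1),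
      (edgesAt G (Dset S c δ ε) x).card
      ≤ 2 * (W.filter (fun x => ¬ (edgesAt G (Dset S c δ ε) x).card = 1)).card := by
    rw [mul_comm]
    apply Finset.sum_le_card_nsmul
    intro x _
    exact Dset_deg_le_two G S c δ ε hc x
  have hsplitcard : L.card + (W.filter (fun x => ¬ (edgesAt G (Dset S c δ ε) x).card = 1)).card
      = W.card := by
    rw [hL]
    exact Finset.card_filter_add_card_filter_not _
  have hVR := VR_card_le G S c δ ε (g₀ := g₀)
  rw [← hW] at hVR
  omega

end Count

/-! ### Structure of a maximum colorable subgraph -/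

lemma fin3_exists_not_mem {s : Finset (Fin 3)} (h : s.card ≤ 2) : ∃ ζ, ζ ∉ s := by
  by_contra h'
  push_neg at h'
  have : s = Finset.univ := Finset.eq_univ_iff_forall.mpr h'
  rw [this] at h
  simp [Finset.card_univ] at h

lemma fin3_others : ∀ γ : Fin 3, ∃ α β : Fin 3,
    α ≠ β ∧ α ≠ γ ∧ β ≠ γ ∧ ∀ x : Fin 3, x = α ∨ x = β ∨ x = γ := by decide

lemma Dset_comm (S : Finset E) (c : E → Fin 3) (δ ε : Fin 3) :
    Dset S c δ ε = Dset S c ε δ := by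
  classical
  ext g; simp [Dset, or_comm]

lemma Dset_card_one {S : Finset E} {c : E → Fin 3} (hc : G.IsProperColoring ↑S c)
    {x : V} {δ ε : Fin 3} (hδ : δ ∉ colorsF G S c x) (hε : ε ∈ colorsF G S c x) :
    ∃ g, edgesAt G (Dset S c δ ε) x = {g} ∧ g ∈ S ∧ x ∈ G.ends g ∧ c g = ε := by
  obtain ⟨g, hgS, hgx, hgc⟩ := (mem_colorsF G).mp hε
  refine ⟨g, ?_, hgS, hgx, hgc⟩
  ext f
  simp only [mem_edgesAt, mem_Dset, Finset.mem_singleton]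
  constructor
  · rintro ⟨⟨hfS, hfc | hfc⟩, hfx⟩
    · exact absurd ((mem_colorsF G).mpr ⟨f, hfS, hfx, hfc⟩) hδ
    · exact color_unique G hc hfS hfx hgS hgx (by rw [hfc, hgc])
  · rintro rfl
    exact ⟨⟨hgS, Or.inr hgc⟩, hgx⟩

lemma uncov_deg_le (hG : G.IsCubic) {S : Finset E} {e : E} (he : e ∉ S) {x : V}
    (hx : x ∈ G.ends e) : (edgesAt G S x).card ≤ 2 := by
  classical
  have hsub : edgesAt G S x ⊆ (edgesAt G Finset.univ x).erase e := by
    intro f hf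
    rw [mem_edgesAt] at hf
    rw [Finset.mem_erase, mem_edgesAt]
    exact ⟨fun hfe => he (hfe ▸ hf.1), Finset.mem_univ f, hf.2⟩
  have := Finset.card_le_card hsub
  rw [Finset.card_erase_of_mem (by rw [mem_edgesAt]; exact ⟨Finset.mem_univ e, hx⟩),
    edgesAt_univ_card G hG] at this
  omega

lemma no_extend {S : Finset E} {c : E → Fin 3} (hc : G.IsProperColoring ↑S c)
    (hmax : ∀ T : Finset E, G.Colorable 3 ↑T → T.card ≤ S.card)
    {e : E} {u v : V} (he : e ∉ S) (hends : G.ends e = s(u, v)) {ζ : Fin 3}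
    (hζu : ζ ∉ colorsF G S c u) (hζv : ζ ∉ colorsF G S c v) : False := by
  have hext : G.IsProperColoring ↑(insert e S) (Function.update c e ζ) := by
    apply extend_proper G hc he
    intro x hx
    rw [hends, Sym2.mem_iff] at hx
    rcases hx with rfl | rfl
    exacts [hζu, hζv]
  have := hmax _ ⟨_, hext⟩
  rw [Finset.card_insert_of_notMem he] at this
  omega

/-- Every vertex of a maximum 3-edge-colorable subgraph of a cubic graph has degree ≥ 2. -/
lemma min_degree_two (hG : G.IsCubic) {S : Finset E} {c : E → Fin 3}
    (hc : G.IsProperColoring ↑S c)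
    (hmax : ∀ T : Finset E, G.Colorable 3 ↑T → T.card ≤ S.card) (v : V) :
    2 ≤ (edgesAt G S v).card := by
  classical
  by_contra hdeg
  push_neg at hdeg
  have hdeg1 : (edgesAt G S v).card ≤ 1 := by omega
  -- there are at least two uncovered edges at v
  have hsub : edgesAt G S v ⊆ edgesAt G Finset.univ v := edgesAt_mono G (Finset.subset_univ _) _
  have huc : 1 < ((edgesAt G Finset.univ v) \ (edgesAt G S v)).card := by
    rw [Finset.card_sdiff_of_subset hsub, edgesAt_univ_card G hG]
    omega
  obtain ⟨e, he, h, hh, hne⟩ := Finset.one_lt_card.mp huc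
  have heS : e ∉ S := by
    rw [Finset.mem_sdiff, mem_edgesAt, mem_edgesAt] at he
    exact fun hx => he.2 ⟨hx, he.1.2⟩
  have hhS : h ∉ S := by
    rw [Finset.mem_sdiff, mem_edgesAt, mem_edgesAt] at hh
    exact fun hx => hh.2 ⟨hx, hh.1.2⟩
  have hev : v ∈ G.ends e := by
    rw [Finset.mem_sdiff, mem_edgesAt] at he; exact he.1.2
  have hhv : v ∈ G.ends h := by
    rw [Finset.mem_sdiff, mem_edgesAt] at hh; exact hh.1.2
  obtain ⟨w, hwv, hew⟩ := other_end G hev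
  obtain ⟨z, hzv, hhz⟩ := other_end G hhv
  -- colors at v : at most one color
  have hcv : (colorsF G S c v).card ≤ 1 := by
    rw [card_colorsF G hc]; exact hdeg1
  -- the colors at v are nonempty : otherwise extend e
  have hwdeg : (edgesAt G S w).card ≤ 2 := uncov_deg_le G hG heS (by rw [hew]; simp)
  have hzdeg : (edgesAt G S z).card ≤ 2 := uncov_deg_le G hG hhS (by rw [hhz]; simp)
  have hcv1 : (colorsF G S c v).card = 1 := by
    rcases Nat.lt_or_ge (colorsF G S c v).card 1 with h0 | h1
    · exfalso
      have hempty : colorsF G S c v = ∅ := Finset.card_eq_zero.mp (by omega)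
      obtain ⟨ζ, hζ⟩ := fin3_exists_not_mem (s := colorsF G S c w) (by rw [card_colorsF G hc]; exact hwdeg)
      exact no_extend G hc hmax heS hew (by rw [hempty]; exact Finset.notMem_empty _) hζ
    · omega
  obtain ⟨γ, hγ⟩ := Finset.card_eq_one.mp hcv1
  obtain ⟨α, β, hαβ, hαγ, hβγ, hall⟩ := fin3_others γ
  -- key facts about the far endpoint of an uncovered edge at v
  have key : ∀ (f : E) (x : V), f ∉ S → G.ends f = s(v, x) →
      γ ∉ colorsF G S c x ∧ α ∈ colorsF G S c x := by
    intro f x hfS hfx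
    have hxdeg : (edgesAt G S x).card ≤ 2 := uncov_deg_le G hG hfS (by rw [hfx]; simp)
    have hmiss : ∀ ζ : Fin 3, ζ ∉ colorsF G S c x → ζ = γ := by
      intro ζ hζ
      by_contra hζγ
      have hζv : ζ ∉ colorsF G S c v := by
        rw [hγ]; simp [hζγ]
      exact no_extend G hc hmax hfS hfx hζv hζ
    obtain ⟨ζ, hζ⟩ := fin3_exists_not_mem (s := colorsF G S c x)
      (by rw [card_colorsF G hc]; exact hxdeg)
    have hγx : γ ∉ colorsF G S c x := by
      have := hmiss ζ hζ; rwa [this] at hζ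
    refine ⟨hγx, ?_⟩
    by_contra hα
    exact hαγ (hmiss α hα)
  obtain ⟨hγw, hαw⟩ := key e w heS hew
  obtain ⟨hγz, hαz⟩ := key h z hhS hhz
  -- w ≠ z
  have hwz : w ≠ z := by
    intro hq
    subst hq
    -- then w has at least two uncovered edges , so degree ≤ 1 and two missing colors
    have hwdeg1 : (edgesAt G S w).card ≤ 1 := by
      have hsubw : edgesAt G S w ⊆ ((edgesAt G Finset.univ w).erase e).erase h := by
        intro f hf
        rw [mem_edgesAt] at hf
        rw [Finset.mem_erase, Finset.mem_erase, mem_edgesAt]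
        exact ⟨fun q => hhS (q ▸ hf.1), fun q => heS (q ▸ hf.1), Finset.mem_univ f, hf.2⟩
      have hcw := Finset.card_le_card hsubw
      have h1 : h ∈ (edgesAt G Finset.univ w).erase e := by
        rw [Finset.mem_erase, mem_edgesAt]
        exact ⟨Ne.symm hne, Finset.mem_univ h, by rw [hhz]; simp⟩
      have he1 : e ∈ edgesAt G Finset.univ w := by
        rw [mem_edgesAt]; exact ⟨Finset.mem_univ e, by rw [hew]; simp⟩
      rw [Finset.card_erase_of_mem h1, Finset.card_erase_of_mem he1,
        edgesAt_univ_card G hG] at hcw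
      omega
    have hcw1 : (colorsF G S c w).card ≤ 1 := by
      rw [card_colorsF G hc]; exact hwdeg1
    obtain ⟨ζ, hζ⟩ := fin3_exists_not_mem (s := (colorsF G S c w) ∪ {γ}) (by
      have hcu := Finset.card_union_le (colorsF G S c w) ({γ} : Finset (Fin 3))
      have : ({γ} : Finset (Fin 3)).card = 1 := Finset.card_singleton γ
      omega)
    rw [Finset.mem_union, Finset.mem_singleton] at hζ
    push_neg at hζ
    have hζv : ζ ∉ colorsF G S c v := by rw [hγ, Finset.mem_singleton]; exact hζ.2
    exact no_extend G hc hmax heS hew hζv hζ.1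
  -- v's unique covered edge g₀ , colored γ
  have hγv : γ ∈ colorsF G S c v := by rw [hγ]; simp
  have hαv : α ∉ colorsF G S c v := by rw [hγ, Finset.mem_singleton]; exact hαγ
  obtain ⟨g₀, hg₀set, hg₀S, hg₀v, hg₀c⟩ := Dset_card_one G hc (δ := α) (ε := γ) hαv hγv
  have h0 : g₀ ∈ Dset S c α γ := by rw [mem_Dset]; exact ⟨hg₀S, Or.inr hg₀c⟩
  obtain ⟨tw, hw_reach, hw_ends⟩ :=
    forced_reach G hc hmax heS hew hαγ hαv hγw hg₀S hg₀v hg₀c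
  obtain ⟨tz, hz_reach, hz_ends⟩ :=
    forced_reach G hc hmax hhS hhz hαγ hαv hγz hg₀S hg₀v hg₀c
  have hvVR : v ∈ VR G S c α γ g₀ := by
    rw [mem_VR]; exact ⟨g₀, Relation.ReflTransGen.refl, hg₀v⟩
  have hwVR : w ∈ VR G S c α γ g₀ := by rw [mem_VR]; exact ⟨tw, hw_reach, hw_ends⟩
  have hzVR : z ∈ VR G S c α γ g₀ := by rw [mem_VR]; exact ⟨tz, hz_reach, hz_ends⟩
  have hvdegD : (edgesAt G (Dset S c α γ) v).card = 1 := by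
    rw [hg₀set]; simp
  have hwdegD : (edgesAt G (Dset S c α γ) w).card = 1 := by
    rw [Dset_comm]
    obtain ⟨g, hgset, _, _, _⟩ := Dset_card_one G hc (δ := γ) (ε := α) hγw hαw
    rw [hgset]; simp
  have hzdegD : (edgesAt G (Dset S c α γ) z).card = 1 := by
    rw [Dset_comm]
    obtain ⟨g, hgset, _, _, _⟩ := Dset_card_one G hc (δ := γ) (ε := α) hγz hαz
    rw [hgset]; simp
  have hLB := leaf_bound G S c α γ hc h0
  have hsub3 : ({v, w, z} : Finset V) ⊆
      (VR G S c α γ g₀).filter (fun x => (edgesAt G (Dset S c α γ) x).card = 1) := by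
    intro x hx
    rw [Finset.mem_insert, Finset.mem_insert, Finset.mem_singleton] at hx
    rw [Finset.mem_filter]
    rcases hx with rfl | rfl | rfl
    exacts [⟨hvVR, hvdegD⟩, ⟨hwVR, hwdegD⟩, ⟨hzVR, hzdegD⟩]
  have hcard3 : ({v, w, z} : Finset V).card = 3 := by
    rw [Finset.card_insert_of_notMem (by
      rw [Finset.mem_insert, Finset.mem_singleton]
      push_neg
      exact ⟨fun q => hwv q.symm, fun q => hzv q.symm⟩),
      Finset.card_insert_of_notMem (by rw [Finset.mem_singleton]; exact hwz),
      Finset.card_singleton]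
  have := Finset.card_le_card hsub3
  omega

noncomputable def fullSet (S : Finset E) : Finset V := by
  classical exact Finset.univ.filter (fun x => (edgesAt G S x).card = 3)

@[simp] lemma mem_fullSet {S : Finset E} {x : V} :
    x ∈ fullSet G S ↔ (edgesAt G S x).card = 3 := by
  classical simp [fullSet]

lemma ends_ne {e : E} {u v : V} (h : G.ends e = s(u, v)) : u ≠ v := by
  intro q
  exact G.no_loops e (by rw [h, q]; exact Sym2.mk_isDiag_iff.mpr rfl)

lemma deg_two_of_uncov (hG : G.IsCubic) {S : Finset E} {c : E → Fin 3}
    (hc : G.IsProperColoring ↑S c)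
    (hmax : ∀ T : Finset E, G.Colorable 3 ↑T → T.card ≤ S.card)
    {e : E} {x : V} (he : e ∉ S) (hx : x ∈ G.ends e) : (edgesAt G S x).card = 2 :=
  le_antisymm (uncov_deg_le G hG he hx) (min_degree_two G hG hc hmax x)

lemma uncov_unique (hG : G.IsCubic) {S : Finset E} {c : E → Fin 3}
    (hc : G.IsProperColoring ↑S c)
    (hmax : ∀ T : Finset E, G.Colorable 3 ↑T → T.card ≤ S.card)
    {e f : E} {x : V} (he : e ∉ S) (hf : f ∉ S) (hxe : x ∈ G.ends e)
    (hxf : x ∈ G.ends f) : e = f := by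
  classical
  have hdeg : (edgesAt G S x).card = 2 := deg_two_of_uncov G hG hc hmax he hxe
  have hsub : edgesAt G S x ⊆ edgesAt G Finset.univ x := edgesAt_mono G (Finset.subset_univ _) _
  have hcard : ((edgesAt G Finset.univ x) \ (edgesAt G S x)).card = 1 := by
    rw [Finset.card_sdiff_of_subset hsub, edgesAt_univ_card G hG, hdeg]
  have he' : e ∈ (edgesAt G Finset.univ x) \ (edgesAt G S x) := by
    rw [Finset.mem_sdiff, mem_edgesAt, mem_edgesAt]
    exact ⟨⟨Finset.mem_univ e, hxe⟩, fun q => he q.1⟩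
  have hf' : f ∈ (edgesAt G Finset.univ x) \ (edgesAt G S x) := by
    rw [Finset.mem_sdiff, mem_edgesAt, mem_edgesAt]
    exact ⟨⟨Finset.mem_univ f, hxf⟩, fun q => hf q.1⟩
  exact Finset.card_le_one.mp (le_of_eq hcard) e he' f hf'

lemma mem_colors_of_ne {S : Finset E} {c : E → Fin 3} (hc : G.IsProperColoring ↑S c)
    {x : V} (hdeg : (edgesAt G S x).card = 2) {α ζ : Fin 3}
    (hα : α ∉ colorsF G S c x) (hζ : ζ ≠ α) : ζ ∈ colorsF G S c x := by
  by_contra h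
  exact hζ (missing_unique G hc hdeg h hα)

lemma rotate_proper {S : Finset E} {c : E → Fin 3} (hc : G.IsProperColoring ↑S c)
    {e : E} {p q : V} (he : e ∉ S) (hends : G.ends e = s(p, q))
    {g : E} (hg : g ∈ S) (hgp : p ∈ G.ends g) (hζq : c g ∉ colorsF G S c q) :
    G.IsProperColoring ↑(insert e (S.erase g)) (Function.update c e (c g)) := by
  classical
  have hsub : (↑(S.erase g) : Set E) ⊆ ↑S := Finset.coe_subset.mpr (Finset.erase_subset g S)
  apply extend_proper G (proper_mono G hsub hc) (fun q => he (Finset.mem_of_mem_erase q))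
  intro x hx
  rw [hends, Sym2.mem_iff] at hx
  rcases hx with rfl | rfl
  · intro hmem
    rw [mem_colorsF] at hmem
    obtain ⟨f, hfS, hfx, hfc⟩ := hmem
    have hf' := Finset.mem_of_mem_erase hfS
    have : f = g := color_unique G hc hf' hfx hg hgp hfc
    exact (Finset.mem_erase.mp hfS).1 this
  · exact fun hmem => hζq (colorsF_mono G (Finset.erase_subset g S) c x hmem)

lemma rotate_card {S : Finset E} {e g : E} (he : e ∉ S) (hg : g ∈ S) :
    (insert e (S.erase g)).card = S.card := by
  classical
  rw [Finset.card_insert_of_notMem (fun q => he (Finset.mem_of_mem_erase q)),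
    Finset.card_erase_of_mem hg]
  have := Finset.card_pos.mpr ⟨g, hg⟩
  omega

/-- Main rotation lemma: the far end of the edge at `u` colored with the color missing
at `v` (for an uncovered edge `uv`) is a vertex of full degree. -/
lemma claimed_full (hG : G.IsCubic) {S : Finset E} {c : E → Fin 3}
    (hc : G.IsProperColoring ↑S c)
    (hmax : ∀ T : Finset E, G.Colorable 3 ↑T → T.card ≤ S.card)
    (hlex : ∀ T : Finset E, G.Colorable 3 ↑T → T.card = S.card →
      (fullSet G T).card ≤ (fullSet G S).card)
    {e : E} {u v : V} (he : e ∉ S) (hends : G.ends e = s(u, v))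
    {g : E} (hg : g ∈ S) (hgu : u ∈ G.ends g) {w : V} (hgw : w ∈ G.ends g) (hwu : w ≠ u)
    (hβv : c g ∉ colorsF G S c v) : (edgesAt G S w).card = 3 := by
  classical
  by_contra hw3
  have hw2 : (edgesAt G S w).card ≤ 2 := by
    have := edgesAt_card_le G hG S w
    omega
  have huv : u ≠ v := ends_ne G hends
  have hdegv : (edgesAt G S v).card = 2 :=
    deg_two_of_uncov G hG hc hmax he (by rw [hends]; simp)
  have hdegu : (edgesAt G S u).card = 2 :=
    deg_two_of_uncov G hG hc hmax he (by rw [hends]; simp)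
  have hvg : v ∉ G.ends g := by
    intro hq
    exact hβv ((mem_colorsF G).mpr ⟨g, hg, hq, rfl⟩)
  have hwv : w ≠ v := fun q => hvg (q ▸ hgw)
  set T := insert e (S.erase g) with hT
  have hprop : G.IsProperColoring ↑T (Function.update c e (c g)) :=
    rotate_proper G hc he hends hg hgu hβv
  have hcardT : T.card = S.card := rotate_card he hg
  -- degrees in T
  have hTv : (edgesAt G T v).card = 3 := by
    have hset : edgesAt G T v = insert e (edgesAt G S v) := by
      ext f
      rw [mem_edgesAt, hT, Finset.mem_insert, Finset.mem_insert, mem_edgesAt]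
      constructor
      · rintro ⟨hf1 | hf1, hf2⟩
        · exact Or.inl hf1
        · exact Or.inr ⟨Finset.mem_of_mem_erase hf1, hf2⟩
      · rintro (rfl | ⟨hf1, hf2⟩)
        · exact ⟨Or.inl rfl, by rw [hends]; simp⟩
        · refine ⟨Or.inr (Finset.mem_erase.mpr ⟨?_, hf1⟩), hf2⟩
          intro q
          exact hvg (q ▸ hf2)
    rw [hset, Finset.card_insert_of_notMem (by rw [mem_edgesAt]; exact fun q => he q.1), hdegv]
  have hfullT : insert v (fullSet G S) ⊆ fullSet G T := by
    intro x hx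
    rw [Finset.mem_insert] at hx
    rcases hx with rfl | hx
    · rw [mem_fullSet]; exact hTv
    · rw [mem_fullSet] at hx ⊢
      have hxu : x ≠ u := fun q => by rw [q, hdegu] at hx; omega
      have hxv : x ≠ v := fun q => by rw [q, hdegv] at hx; omega
      have hxw : x ≠ w := fun q => by rw [q] at hx; omega
      have hset : edgesAt G T x = edgesAt G S x := by
        ext f
        rw [mem_edgesAt, hT, Finset.mem_insert, mem_edgesAt]
        constructor
        · rintro ⟨rfl | hf1, hf2⟩
          · exfalso
            rw [hends, Sym2.mem_iff] at hf2
            rcases hf2 with rfl | rfl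
            exacts [hxu rfl, hxv rfl]
          · exact ⟨Finset.mem_of_mem_erase hf1, hf2⟩
        · rintro ⟨hf1, hf2⟩
          refine ⟨Or.inr (Finset.mem_erase.mpr ⟨?_, hf1⟩), hf2⟩
          rintro rfl
          rcases ends_eq_of_mem G hgu hgw (Ne.symm hwu) hf2 with rfl | rfl
          exacts [hxu rfl, hxw rfl]
      rw [hset]; exact hx
  have hvnot : v ∉ fullSet G S := by rw [mem_fullSet, hdegv]; omega
  have hcard := Finset.card_le_card hfullT
  rw [Finset.card_insert_of_notMem hvnot] at hcard
  have := hlex T ⟨_, hprop⟩ hcardT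
  omega

lemma recolor_proper {T : Finset E} {c1 : E → Fin 3} (hc1 : G.IsProperColoring ↑T c1)
    {g : E} {ζ : Fin 3}
    (hok : ∀ f ∈ T, f ≠ g → G.EdgeAdj g f → c1 f ≠ ζ) :
    G.IsProperColoring ↑T (Function.update c1 g ζ) := by
  classical
  intro a ha b hb hab hadj
  rw [mem_coe] at ha hb
  by_cases hag : a = g <;> by_cases hbg : b = g
  · subst hag; subst hbg; exact absurd rfl hab
  · subst hag
    rw [Function.update_self, Function.update_of_ne hbg]
    exact fun hq => hok b hb hbg hadj hq.symm
  · subst hbg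
    rw [Function.update_self, Function.update_of_ne hag]
    exact hok a ha hag (edgeAdj_symm G hadj)
  · rw [Function.update_of_ne hag, Function.update_of_ne hbg]
    exact hc1 a ha b hb hab hadj

/-- The master rotation contradiction: if `e = pq` is uncovered with the color of `gpw`
missing at `q`; `gpw` joins `p` to `w`; `f = xy` is another uncovered edge; `gxw` joins
`x` to `w`; the color of `gpw` is missing at `x` and the color of `gxw` is missing at `y`,
then the colorable subgraph was not maximum. -/
lemma rot_contra (hG : G.IsCubic) {S : Finset E} {c : E → Fin 3}
    (hc : G.IsProperColoring ↑S c)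
    (hmax : ∀ T : Finset E, G.Colorable 3 ↑T → T.card ≤ S.card)
    {e f : E} {p q x y w : V} {gpw gxw : E}
    (he : e ∉ S) (hf : f ∉ S) (hef : f ≠ e)
    (hends_e : G.ends e = s(p, q)) (hends_f : G.ends f = s(x, y))
    (hgpw : gpw ∈ S) (hp1 : p ∈ G.ends gpw) (hw1 : w ∈ G.ends gpw)
    (hgxw : gxw ∈ S) (hx1 : x ∈ G.ends gxw) (hw2 : w ∈ G.ends gxw)
    (hgg : gxw ≠ gpw) (hxw : x ≠ w)
    (hζq : c gpw ∉ colorsF G S c q) (hζx : c gpw ∉ colorsF G S c x)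
    (hθy : c gxw ∉ colorsF G S c y)
    (hwe : w ∉ G.ends e) (hxe : x ∉ G.ends e) (hye : y ∉ G.ends e)
    (hyg2 : y ∉ G.ends gxw) : False := by
  classical
  set T := insert e (S.erase gpw) with hT
  set c1 := Function.update c e (c gpw) with hc1
  have hprop1 : G.IsProperColoring ↑T c1 := rotate_proper G hc he hends_e hgpw hp1 hζq
  have hcardT : T.card = S.card := rotate_card he hgpw
  have hmemT : ∀ {f' : E}, f' ∈ T ↔ f' = e ∨ (f' ≠ gpw ∧ f' ∈ S) := by
    intro f'
    rw [hT, Finset.mem_insert, Finset.mem_erase]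
  have hgxwT : gxw ∈ T := hmemT.mpr (Or.inr ⟨hgg, hgxw⟩)
  have hθζ : c gxw ≠ c gpw := by
    intro hq
    exact hζx ((mem_colorsF G).mpr ⟨gxw, hgxw, hx1, hq⟩)
  -- recolor gxw with the color of gpw
  set c2 := Function.update c1 gxw (c gpw) with hc2
  have hprop2 : G.IsProperColoring ↑T c2 := by
    apply recolor_proper G hprop1
    intro f' hf' hne hadj
    obtain ⟨z, hz1, hz2⟩ := hadj
    have hz : z = x ∨ z = w := ends_eq_of_mem G hx1 hw2 hxw hz1
    have hf'e : f' ≠ e := by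
      rintro rfl
      rcases hz with rfl | rfl
      exacts [hxe hz2, hwe hz2]
    have hc1f' : c1 f' = c f' := Function.update_of_ne hf'e _ _
    rw [hc1f']
    have hf'S : f' ∈ S := ((hmemT.mp hf').resolve_left hf'e).2
    have hf'g : f' ≠ gpw := ((hmemT.mp hf').resolve_left hf'e).1
    rcases hz with rfl | rfl
    · intro hq
      exact hζx ((mem_colorsF G).mpr ⟨f', hf'S, hz2, hq⟩)
    · intro hq
      exact hf'g (color_unique G hc hf'S hz2 hgpw hw1 hq)
  -- extend to f with the color of gxw
  have hfT : f ∉ T := by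
    rw [hmemT]
    push_neg
    exact ⟨hef, fun _ => hf⟩
  have hxcol : c gxw ∉ colorsF G T c2 x := by
    intro hmem
    rw [mem_colorsF] at hmem
    obtain ⟨f', hf'T, hf'x, hf'c⟩ := hmem
    by_cases hfg : f' = gxw
    · subst hfg
      rw [hc2, Function.update_self] at hf'c
      exact hθζ hf'c.symm
    · rw [hc2, Function.update_of_ne hfg] at hf'c
      have hf'e : f' ≠ e := by rintro rfl; exact hxe hf'x
      rw [hc1, Function.update_of_ne hf'e] at hf'c
      have hf'S : f' ∈ S := ((hmemT.mp hf'T).resolve_left hf'e).2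
      exact hfg (color_unique G hc hf'S hf'x hgxw hx1 hf'c)
  have hycol : c gxw ∉ colorsF G T c2 y := by
    intro hmem
    rw [mem_colorsF] at hmem
    obtain ⟨f', hf'T, hf'y, hf'c⟩ := hmem
    have hfg : f' ≠ gxw := by rintro rfl; exact hyg2 hf'y
    have hf'e : f' ≠ e := by rintro rfl; exact hye hf'y
    rw [hc2, Function.update_of_ne hfg, hc1, Function.update_of_ne hf'e] at hf'c
    have hf'S : f' ∈ S := ((hmemT.mp hf'T).resolve_left hf'e).2
    exact hθy ((mem_colorsF G).mpr ⟨f', hf'S, hf'y, hf'c⟩)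
  have hext : G.IsProperColoring ↑(insert f T) (Function.update c2 f (c gxw)) := by
    apply extend_proper G hprop2 hfT
    intro z hz
    rw [hends_f, Sym2.mem_iff] at hz
    rcases hz with rfl | rfl
    exacts [hxcol, hycol]
  have := hmax _ ⟨_, hext⟩
  rw [Finset.card_insert_of_notMem hfT, hcardT] at this
  omega

lemma fin3_all_of_distinct {a b c : Fin 3} (hab : a ≠ b) (hac : a ≠ c) (hbc : b ≠ c) :
    ∀ x : Fin 3, x = a ∨ x = b ∨ x = c := by
  revert hab hac hbc; revert a b c; decide

/-- `e` (uncovered) claims the vertex `w` : `w` is the far end of the edge at an endpoint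
`u` of `e` whose color is missing at the other endpoint `v` of `e`. -/
def claimRel (S : Finset E) (c : E → Fin 3) (e : E) (w : V) : Prop :=
  e ∉ S ∧ ∃ (u v : V) (g : E), G.ends e = s(u, v) ∧ g ∈ S ∧ u ∈ G.ends g ∧
    w ∈ G.ends g ∧ w ≠ u ∧ c g ∉ colorsF G S c v

noncomputable def claimF (S : Finset E) (c : E → Fin 3) (e : E) : Finset V := by
  classical exact Finset.univ.filter (claimRel G S c e)

@[simp] lemma mem_claimF {S : Finset E} {c : E → Fin 3} {e : E} {w : V} :
    w ∈ claimF G S c e ↔ claimRel G S c e w := by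
  classical simp [claimF]

lemma claim_full (hG : G.IsCubic) {S : Finset E} {c : E → Fin 3}
    (hc : G.IsProperColoring ↑S c)
    (hmax : ∀ T : Finset E, G.Colorable 3 ↑T → T.card ≤ S.card)
    (hlex : ∀ T : Finset E, G.Colorable 3 ↑T → T.card = S.card →
      (fullSet G T).card ≤ (fullSet G S).card)
    {e : E} {w : V} (hw : w ∈ claimF G S c e) : (edgesAt G S w).card = 3 := by
  rw [mem_claimF] at hw
  obtain ⟨he, u, v, g, hends, hg, hgu, hgw, hwu, hβv⟩ := hw
  exact claimed_full G hG hc hmax hlex he hends hg hgu hgw hwu hβv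

lemma claim_exists (hG : G.IsCubic) {S : Finset E} {c : E → Fin 3}
    (hc : G.IsProperColoring ↑S c)
    (hmax : ∀ T : Finset E, G.Colorable 3 ↑T → T.card ≤ S.card)
    {e : E} {u v : V} (he : e ∉ S) (hends : G.ends e = s(u, v)) :
    ∃ (w : V) (g : E), g ∈ S ∧ u ∈ G.ends g ∧ w ∈ G.ends g ∧ w ≠ u ∧
      c g ∉ colorsF G S c v ∧ w ∈ claimF G S c e := by
  have hu : u ∈ G.ends e := by rw [hends]; simp
  have hv : v ∈ G.ends e := by rw [hends]; simp
  have hdegv : (edgesAt G S v).card = 2 := deg_two_of_uncov G hG hc hmax he hv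
  obtain ⟨β, hβ⟩ := exists_missing G hc (v := v) (by omega)
  have hβu : β ∈ colorsF G S c u := by
    by_contra hq
    exact no_extend G hc hmax he hends hq hβ
  obtain ⟨g, hgS, hgu, hgc⟩ := (mem_colorsF G).mp hβu
  obtain ⟨w, hwu, hgw⟩ := other_end G hgu
  refine ⟨w, g, hgS, hgu, by rw [hgw]; simp, hwu, by rw [hgc]; exact hβ, ?_⟩
  rw [mem_claimF]
  exact ⟨he, u, v, g, hends, hgS, hgu, by rw [hgw]; simp, hwu, by rw [hgc]; exact hβ⟩

/-- At most two distinct uncovered edges claim any given vertex. -/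
lemma claimers_le_two (hG : G.IsCubic) {S : Finset E} {c : E → Fin 3}
    (hc : G.IsProperColoring ↑S c)
    (hmax : ∀ T : Finset E, G.Colorable 3 ↑T → T.card ≤ S.card) (w : V) :
    ((Finset.univ \ S).filter (fun e => w ∈ claimF G S c e)).card ≤ 2 := by
  classical
  by_contra hcard
  push_neg at hcard
  obtain ⟨e₁, e₂, e₃, he₁m, he₂m, he₃m, h12, h13, h23⟩ := Finset.two_lt_card_iff.mp hcard
  have unpack : ∀ {e : E}, e ∈ (Finset.univ \ S).filter (fun e => w ∈ claimF G S c e) →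
      e ∉ S ∧ ∃ (z t : V) (g : E), G.ends e = s(z, t) ∧ g ∈ S ∧ z ∈ G.ends g ∧
        w ∈ G.ends g ∧ w ≠ z ∧ c g ∉ colorsF G S c t := by
    intro e hmem
    rw [Finset.mem_filter, mem_claimF] at hmem
    exact hmem.2
  obtain ⟨he₁S, z₁, t₁, g₁, hends₁, hg₁S, hz₁g, hwg₁, hwz₁, hmiss₁⟩ := unpack he₁m
  obtain ⟨he₂S, z₂, t₂, g₂, hends₂, hg₂S, hz₂g, hwg₂, hwz₂, hmiss₂⟩ := unpack he₂m
  obtain ⟨he₃S, z₃, t₃, g₃, hends₃, hg₃S, hz₃g, hwg₃, hwz₃, hmiss₃⟩ := unpack he₃m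
  -- endpoints are on their edges
  have hz₁e : z₁ ∈ G.ends e₁ := by rw [hends₁]; simp
  have ht₁e : t₁ ∈ G.ends e₁ := by rw [hends₁]; simp
  have hz₂e : z₂ ∈ G.ends e₂ := by rw [hends₂]; simp
  have ht₂e : t₂ ∈ G.ends e₂ := by rw [hends₂]; simp
  have hz₃e : z₃ ∈ G.ends e₃ := by rw [hends₃]; simp
  have ht₃e : t₃ ∈ G.ends e₃ := by rw [hends₃]; simp
  -- the slot edges are pairwise distinct
  have slot : ∀ {ea eb : E} {za zb : V} {ga gb : E}, ea ≠ eb → ea ∉ S → eb ∉ S →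
      za ∈ G.ends ea → zb ∈ G.ends eb → za ∈ G.ends ga → w ∈ G.ends ga → w ≠ za →
      w ≠ zb → zb ∈ G.ends gb → ga = gb → False := by
    intro ea eb za zb ga gb hne heaS hebS hzaea hzbeb hzaga hwga hwza hwzb hzbgb hq
    subst hq
    have : zb = za ∨ zb = w := ends_eq_of_mem G hzaga hwga (Ne.symm hwza) hzbgb
    rcases this with rfl | rfl
    · exact hne (uncov_unique G hG hc hmax heaS hebS hzaea hzbeb)
    · exact hwzb rfl
  have hg12 : g₁ ≠ g₂ := fun hq => slot h12 he₁S he₂S hz₁e hz₂e hz₁g hwg₁ hwz₁ hwz₂ hz₂g hq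
  have hg13 : g₁ ≠ g₃ := fun hq => slot h13 he₁S he₃S hz₁e hz₃e hz₁g hwg₁ hwz₁ hwz₃ hz₃g hq
  have hg23 : g₂ ≠ g₃ := fun hq => slot h23 he₂S he₃S hz₂e hz₃e hz₂g hwg₂ hwz₂ hwz₃ hz₃g hq
  -- the three slot colors are pairwise distinct
  have hc12 : c g₁ ≠ c g₂ := hc g₁ hg₁S g₂ hg₂S hg12 ⟨w, hwg₁, hwg₂⟩
  have hc13 : c g₁ ≠ c g₃ := hc g₁ hg₁S g₃ hg₃S hg13 ⟨w, hwg₁, hwg₃⟩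
  have hc23 : c g₂ ≠ c g₃ := hc g₂ hg₂S g₃ hg₃S hg23 ⟨w, hwg₂, hwg₃⟩
  have hall := fin3_all_of_distinct hc12 hc13 hc23
  -- w has full degree , so w is not an endpoint of any uncovered edge
  have hdegw : (edgesAt G S w).card = 3 := by
    have hsub : ({g₁, g₂, g₃} : Finset E) ⊆ edgesAt G S w := by
      intro a ha
      rw [Finset.mem_insert, Finset.mem_insert, Finset.mem_singleton] at ha
      rw [mem_edgesAt]
      rcases ha with rfl | rfl | rfl
      exacts [⟨hg₁S, hwg₁⟩, ⟨hg₂S, hwg₂⟩, ⟨hg₃S, hwg₃⟩]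
    have h3 : ({g₁, g₂, g₃} : Finset E).card = 3 := by
      rw [Finset.card_insert_of_notMem (by
          rw [Finset.mem_insert, Finset.mem_singleton]; push_neg; exact ⟨hg12, hg13⟩),
        Finset.card_insert_of_notMem (by rw [Finset.mem_singleton]; exact hg23),
        Finset.card_singleton]
    have := Finset.card_le_card hsub
    have := edgesAt_card_le G hG S w
    omega
  have hwnotuncov : ∀ {f : E} {x : V}, f ∉ S → x ∈ G.ends f → x ≠ w := by
    intro f x hfS hxf hq
    subst hq
    have := deg_two_of_uncov G hG hc hmax hfS hxf
    omega
  -- degrees of the endpoints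
  have hdz₂ : (edgesAt G S z₂).card = 2 := deg_two_of_uncov G hG hc hmax he₂S hz₂e
  have hdt₂ : (edgesAt G S t₂).card = 2 := deg_two_of_uncov G hG hc hmax he₂S ht₂e
  have hdz₃ : (edgesAt G S z₃).card = 2 := deg_two_of_uncov G hG hc hmax he₃S hz₃e
  -- missing colors at z₂ and z₃
  obtain ⟨α₂, hα₂⟩ := exists_missing G hc (v := z₂) (by omega)
  obtain ⟨α₃, hα₃⟩ := exists_missing G hc (v := z₃) (by omega)
  -- generic rotation argument : the missing color at z₂ is not c g₁
  have rotgen : ∀ {ea eb : E} {za ta zb tb : V} {ga gb : E}, eb ≠ ea → ea ∉ S → eb ∉ S →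
      G.ends ea = s(za, ta) → G.ends eb = s(zb, tb) → ga ∈ S → za ∈ G.ends ga →
      w ∈ G.ends ga → gb ∈ S → zb ∈ G.ends gb → w ∈ G.ends gb → gb ≠ ga → zb ≠ w →
      c ga ∉ colorsF G S c ta → c gb ∉ colorsF G S c tb →
      c ga ∉ colorsF G S c zb → False := by
    intro ea eb za ta zb tb ga gb hne heaS hebS hendsa hendsb hgaS hzaga hwga hgbS
      hzbgb hwgb hgba hzbw hθa hθb hαzb
    have hzae : za ∈ G.ends ea := by rw [hendsa]; simp
    have htae : ta ∈ G.ends ea := by rw [hendsa]; simp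
    have hzbe : zb ∈ G.ends eb := by rw [hendsb]; simp
    have htbe : tb ∈ G.ends eb := by rw [hendsb]; simp
    apply rot_contra G hG hc hmax heaS hebS hne hendsa hendsb hgaS hzaga hwga hgbS
      hzbgb hwgb hgba hzbw hθa hαzb hθb
    · intro hq
      exact hwnotuncov heaS hq rfl
    · intro hq
      exact hne (uncov_unique G hG hc hmax hebS heaS hzbe hq)
    · intro hq
      exact hne (uncov_unique G hG hc hmax hebS heaS htbe hq)
    · intro hq
      rcases ends_eq_of_mem G hzbgb hwgb hzbw hq with hq2 | hq2
      · exact (ends_ne G hendsb) (hq2.symm ▸ rfl)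
      · exact hwnotuncov hebS htbe hq2
  -- pin down the missing colors
  have hmemg₂z₂ : c g₂ ∈ colorsF G S c z₂ := (mem_colorsF G).mpr ⟨g₂, hg₂S, hz₂g, rfl⟩
  have hmemg₃z₃ : c g₃ ∈ colorsF G S c z₃ := (mem_colorsF G).mpr ⟨g₃, hg₃S, hz₃g, rfl⟩
  have hα₂g₂ : α₂ ≠ c g₂ := fun hq => hα₂ (by rw [hq]; exact hmemg₂z₂)
  have hα₂g₁ : α₂ ≠ c g₁ := by
    intro hq
    exact rotgen h12.symm he₁S he₂S hends₁ hends₂ hg₁S hz₁g hwg₁ hg₂S hz₂g hwg₂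
      hg12.symm (Ne.symm hwz₂) hmiss₁ hmiss₂ (by rw [← hq]; exact hα₂)
  have hα₂3 : α₂ = c g₃ := by
    rcases hall α₂ with h | h | h
    exacts [absurd h hα₂g₁, absurd h hα₂g₂, h]
  have hα₃g₃ : α₃ ≠ c g₃ := fun hq => hα₃ (by rw [hq]; exact hmemg₃z₃)
  have hα₃g₁ : α₃ ≠ c g₁ := by
    intro hq
    exact rotgen h13.symm he₁S he₃S hends₁ hends₃ hg₁S hz₁g hwg₁ hg₃S hz₃g hwg₃
      hg13.symm (Ne.symm hwz₃) hmiss₁ hmiss₃ (by rw [← hq]; exact hα₃)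
  have hα₃2 : α₃ = c g₂ := by
    rcases hall α₃ with h | h | h
    exacts [absurd h hα₃g₁, h, absurd h hα₃g₃]
  -- leaf-count contradiction in the (c g₃ , c g₂)-subgraph , component of g₂
  have h0 : g₂ ∈ Dset S c (c g₃) (c g₂) := by rw [mem_Dset]; exact ⟨hg₂S, Or.inr rfl⟩
  have hg₃D : g₃ ∈ Dset S c (c g₃) (c g₂) := by rw [mem_Dset]; exact ⟨hg₃S, Or.inl rfl⟩
  have hz₂VR : z₂ ∈ VR G S c (c g₃) (c g₂) g₂ := by
    rw [mem_VR]; exact ⟨g₂, Relation.ReflTransGen.refl, hz₂g⟩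
  have hz₃VR : z₃ ∈ VR G S c (c g₃) (c g₂) g₂ := by
    rw [mem_VR]
    exact ⟨g₃, Relation.ReflTransGen.single ⟨h0, hg₃D, ⟨w, hwg₂, hwg₃⟩⟩, hz₃g⟩
  have ht₂VR : t₂ ∈ VR G S c (c g₃) (c g₂) g₂ := by
    obtain ⟨h, hr, hth⟩ := forced_reach G hc hmax he₂S hends₂ (Ne.symm hc23)
      (hα₂3 ▸ hα₂) hmiss₂ hg₂S hz₂g rfl
    rw [mem_VR]; exact ⟨h, hr, hth⟩
  have hdz₂D : (edgesAt G (Dset S c (c g₃) (c g₂)) z₂).card = 1 := by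
    obtain ⟨g, hgset, _, _, _⟩ := Dset_card_one G hc (δ := c g₃) (ε := c g₂)
      (hα₂3 ▸ hα₂) hmemg₂z₂
    rw [hgset]; simp
  have hdt₂D : (edgesAt G (Dset S c (c g₃) (c g₂)) t₂).card = 1 := by
    rw [Dset_comm]
    have hg₃t₂ : c g₃ ∈ colorsF G S c t₂ := mem_colors_of_ne G hc hdt₂ hmiss₂ (Ne.symm hc23)
    obtain ⟨g, hgset, _, _, _⟩ := Dset_card_one G hc (δ := c g₂) (ε := c g₃) hmiss₂ hg₃t₂
    rw [hgset]; simp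
  have hdz₃D : (edgesAt G (Dset S c (c g₃) (c g₂)) z₃).card = 1 := by
    rw [Dset_comm]
    obtain ⟨g, hgset, _, _, _⟩ := Dset_card_one G hc (δ := c g₂) (ε := c g₃)
      (hα₃2 ▸ hα₃) hmemg₃z₃
    rw [hgset]; simp
  have d1 : z₂ ≠ t₂ := ends_ne G hends₂
  have d2 : z₂ ≠ z₃ := fun hq =>
    h23 (uncov_unique G hG hc hmax he₂S he₃S hz₂e (by rw [hq]; exact hz₃e))
  have d3 : t₂ ≠ z₃ := fun hq =>
    h23 (uncov_unique G hG hc hmax he₂S he₃S ht₂e (by rw [hq]; exact hz₃e))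
  have hLB := leaf_bound G S c (c g₃) (c g₂) hc h0
  have hsub3 : ({z₂, t₂, z₃} : Finset V) ⊆
      (VR G S c (c g₃) (c g₂) g₂).filter
        (fun x => (edgesAt G (Dset S c (c g₃) (c g₂)) x).card = 1) := by
    intro x hx
    rw [Finset.mem_insert, Finset.mem_insert, Finset.mem_singleton] at hx
    rw [Finset.mem_filter]
    rcases hx with rfl | rfl | rfl
    exacts [⟨hz₂VR, hdz₂D⟩, ⟨ht₂VR, hdt₂D⟩, ⟨hz₃VR, hdz₃D⟩]
  have hcard3 : ({z₂, t₂, z₃} : Finset V).card = 3 := by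
    rw [Finset.card_insert_of_notMem (by
        rw [Finset.mem_insert, Finset.mem_singleton]; push_neg; exact ⟨d1, d2⟩),
      Finset.card_insert_of_notMem (by rw [Finset.mem_singleton]; exact d3),
      Finset.card_singleton]
  have := Finset.card_le_card hsub3
  omega


/-- If `e`'s claimed set is the single vertex `w` , then no other uncovered edge claims `w`. -/
lemma singleton_claim_exclusive (hG : G.IsCubic) {S : Finset E} {c : E → Fin 3}
    (hc : G.IsProperColoring ↑S c)
    (hmax : ∀ T : Finset E, G.Colorable 3 ↑T → T.card ≤ S.card)
    (hlex : ∀ T : Finset E, G.Colorable 3 ↑T → T.card = S.card →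
      (fullSet G T).card ≤ (fullSet G S).card)
    {e : E} {w : V} (he : e ∉ S) (hsingle : claimF G S c e = {w})
    {f : E} (hf : f ∉ S) (hfe : f ≠ e) : w ∉ claimF G S c f := by
  classical
  intro hwf
  obtain ⟨u, v, huv, hends⟩ := two_ends G e
  have hends' : G.ends e = s(v, u) := by rw [hends]; exact Sym2.eq_swap
  obtain ⟨w₁, g₁, hg₁S, hug₁, hw₁g₁, hw₁u, hmissv, hw₁claim⟩ :=
    claim_exists G hG hc hmax he hends
  obtain ⟨w₂, g₂, hg₂S, hvg₂, hw₂g₂, hw₂v, hmissu, hw₂claim⟩ :=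
    claim_exists G hG hc hmax he hends'
  rw [hsingle, Finset.mem_singleton] at hw₁claim hw₂claim
  rw [hw₁claim] at hw₁g₁ hw₁u
  rw [hw₂claim] at hw₂g₂ hw₂v
  have hue : u ∈ G.ends e := by rw [hends]; simp
  have hve : v ∈ G.ends e := by rw [hends]; simp
  have hdegw : (edgesAt G S w).card = 3 :=
    claim_full G hG hc hmax hlex (by rw [hsingle]; simp)
  have hwnotuncov : ∀ {f' : E} {x : V}, f' ∉ S → x ∈ G.ends f' → x ≠ w := by
    intro f' x hf'S hxf' hq
    subst hq
    have := deg_two_of_uncov G hG hc hmax hf'S hxf'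
    omega
  have hg₁g₂ : g₁ ≠ g₂ := by
    intro hq
    exact hmissv ((mem_colorsF G).mpr ⟨g₁, hg₁S, by rw [hq]; exact hvg₂, rfl⟩)
  have hc₁₂ : c g₁ ≠ c g₂ := hc g₁ hg₁S g₂ hg₂S hg₁g₂ ⟨w, hw₁g₁, hw₂g₂⟩
  -- unpack the claim of f at w
  rw [mem_claimF] at hwf
  obtain ⟨hfS', x, y, gf, hends_f, hgfS, hxgf, hwgf, hwx, hmissy⟩ := hwf
  have hxf : x ∈ G.ends f := by rw [hends_f]; simp
  have hyf : y ∈ G.ends f := by rw [hends_f]; simp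
  have hxu : x ≠ u := fun hq => hfe (uncov_unique G hG hc hmax hf he hxf (by rw [hq]; exact hue))
  have hxv : x ≠ v := fun hq => hfe (uncov_unique G hG hc hmax hf he hxf (by rw [hq]; exact hve))
  have hyu : y ≠ u := fun hq => hfe (uncov_unique G hG hc hmax hf he hyf (by rw [hq]; exact hue))
  have hyv : y ≠ v := fun hq => hfe (uncov_unique G hG hc hmax hf he hyf (by rw [hq]; exact hve))
  have hwu : w ≠ u := hw₁u
  have hwv : w ≠ v := hw₂v
  have hgf₁ : gf ≠ g₁ := by
    intro hq
    subst hq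
    rcases ends_eq_of_mem G hug₁ hw₁g₁ (fun hq2 => hw₁u hq2.symm) hxgf with hq2 | hq2
    exacts [hxu hq2, hwx hq2.symm]
  have hgf₂ : gf ≠ g₂ := by
    intro hq
    subst hq
    rcases ends_eq_of_mem G hvg₂ hw₂g₂ (fun hq2 => hw₂v hq2.symm) hxgf with hq2 | hq2
    exacts [hxv hq2, hwx hq2.symm]
  have hcf₁ : c gf ≠ c g₁ := hc gf hgfS g₁ hg₁S hgf₁ ⟨w, hwgf, hw₁g₁⟩
  have hcf₂ : c gf ≠ c g₂ := hc gf hgfS g₂ hg₂S hgf₂ ⟨w, hwgf, hw₂g₂⟩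
  have hdx : (edgesAt G S x).card = 2 := deg_two_of_uncov G hG hc hmax hf hxf
  obtain ⟨αf, hαf⟩ := exists_missing G hc (v := x) (by omega)
  have hαfgf : αf ≠ c gf :=
    fun hq => hαf (by rw [hq]; exact (mem_colorsF G).mpr ⟨gf, hgfS, hxgf, rfl⟩)
  have hwe : w ∉ G.ends e := by
    intro hq
    rw [hends, Sym2.mem_iff] at hq
    rcases hq with hq | hq
    exacts [hwu hq, hwv hq]
  have hxe : x ∉ G.ends e := by
    intro hq
    rw [hends, Sym2.mem_iff] at hq
    rcases hq with hq | hq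
    exacts [hxu hq, hxv hq]
  have hye : y ∉ G.ends e := by
    intro hq
    rw [hends, Sym2.mem_iff] at hq
    rcases hq with hq | hq
    exacts [hyu hq, hyv hq]
  have hygf : y ∉ G.ends gf := by
    intro hq
    rcases ends_eq_of_mem G hxgf hwgf (fun hq2 => hwx hq2.symm) hq with hq2 | hq2
    · exact (ends_ne G hends_f) hq2.symm
    · exact hwnotuncov hf hyf hq2
  have hall := fin3_all_of_distinct hcf₁ hcf₂ hc₁₂
  rcases hall αf with hα | hα | hα
  · exact absurd hα hαfgf
  · -- αf = c g₁ : rotate out g₁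
    exact rot_contra G hG hc hmax he hf hfe hends hends_f hg₁S hug₁ hw₁g₁ hgfS hxgf hwgf
      hgf₁ (fun hq => hwx hq.symm) hmissv (by rw [← hα]; exact hαf) hmissy hwe hxe hye hygf
  · -- αf = c g₂ : rotate out g₂
    exact rot_contra G hG hc hmax he hf hfe hends' hends_f hg₂S hvg₂ hw₂g₂ hgfS hxgf hwgf
      hgf₂ (fun hq => hwx hq.symm) hmissu (by rw [← hα]; exact hαf) hmissy
      (by rw [hends']; rw [hends] at hwe; rw [Sym2.eq_swap]; exact hwe)
      (by rw [hends']; rw [hends] at hxe; rw [Sym2.eq_swap]; exact hxe)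
      (by rw [hends']; rw [hends] at hye; rw [Sym2.eq_swap]; exact hye) hygf

/-- There are at least as many full vertices as uncovered edges. -/
lemma uncovered_le_full (hG : G.IsCubic) {S : Finset E} {c : E → Fin 3}
    (hc : G.IsProperColoring ↑S c)
    (hmax : ∀ T : Finset E, G.Colorable 3 ↑T → T.card ≤ S.card)
    (hlex : ∀ T : Finset E, G.Colorable 3 ↑T → T.card = S.card →
      (fullSet G T).card ≤ (fullSet G S).card) :
    (Finset.univ \ S).card ≤ (fullSet G S).card := by
  classical
  set U := Finset.univ \ S with hU
  set t : {e // e ∈ U} → Finset V := fun e => claimF G S c e.1 with ht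
  have hUuncov : ∀ (e : {e // e ∈ U}), e.1 ∉ S := fun e => (Finset.mem_sdiff.mp e.2).2
  have hne : ∀ (e : {e // e ∈ U}), (t e).Nonempty := by
    intro e
    obtain ⟨u, v, huv, hends⟩ := two_ends G e.1
    obtain ⟨w, g, _, _, _, _, _, hw⟩ := claim_exists G hG hc hmax (hUuncov e) hends
    exact ⟨w, hw⟩
  have hhall : ∀ A : Finset {e // e ∈ U}, A.card ≤ (A.biUnion t).card := by
    intro A
    set A₁ := A.filter (fun e => (t e).card ≤ 1) with hA₁
    set A₂ := A.filter (fun e => ¬ (t e).card ≤ 1) with hA₂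
    have hsingle : ∀ e ∈ A₁, ∃ w, t e = {w} := by
      intro e he'
      rw [hA₁, Finset.mem_filter] at he'
      obtain ⟨w, hw⟩ := hne e
      exact Finset.card_eq_one.mp (le_antisymm he'.2 (Finset.card_pos.mpr ⟨w, hw⟩))
    choose wfun hwfun using hsingle
    have h1 : A₁.card ≤ (A₁.biUnion t).card := by
      rcases A₁.eq_empty_or_nonempty with hemp | ⟨e₀, he₀⟩
      · simp [hemp]
      · apply Finset.card_le_card_of_injOn
          (fun e => if he : e ∈ A₁ then wfun e he else wfun e₀ he₀)
        · intro e he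
          simp only [Finset.mem_coe] at he ⊢
          rw [dif_pos he]
          exact Finset.mem_biUnion.mpr ⟨e, he, by rw [hwfun e he]; simp⟩
        · intro a ha b hb hab
          rw [mem_coe] at ha hb
          simp only at hab
          rw [dif_pos ha, dif_pos hb] at hab
          by_contra hne'
          have hval : b.1 ≠ a.1 := fun q => hne' (Subtype.ext q).symm
          have hwb : wfun a ha ∈ claimF G S c b.1 := by
            have hmem : wfun b hb ∈ t b := by rw [hwfun b hb]; simp
            rw [hab]
            exact hmem
          exact singleton_claim_exclusive G hG hc hmax hlex (hUuncov a)
            (hwfun a ha) (hUuncov b) hval hwb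
    have hdisj : Disjoint (A₁.biUnion t) (A₂.biUnion t) := by
      rw [Finset.disjoint_left]
      intro w hw1 hw2
      obtain ⟨a, ha, hwa⟩ := Finset.mem_biUnion.mp hw1
      obtain ⟨b, hb, hwb⟩ := Finset.mem_biUnion.mp hw2
      have hval : b.1 ≠ a.1 := by
        intro q
        have hba : b = a := Subtype.ext q
        subst hba
        rw [hA₁, Finset.mem_filter] at ha
        rw [hA₂, Finset.mem_filter] at hb
        exact hb.2 ha.2
      have hwa' : w = wfun a ha := by
        have hq := hwfun a ha
        rw [hq, Finset.mem_singleton] at hwa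
        exact hwa
      subst hwa'
      exact singleton_claim_exclusive G hG hc hmax hlex (hUuncov a) (hwfun a ha)
        (hUuncov b) hval hwb
    have h2 : A₂.card ≤ (A₂.biUnion t).card := by
      have hcount : ∀ e ∈ A₂, (t e).card = ((A₂.biUnion t).filter (fun w => w ∈ t e)).card := by
        intro e he
        congr 1
        ext w
        rw [Finset.mem_filter]
        exact ⟨fun hw => ⟨Finset.mem_biUnion.mpr ⟨e, he, hw⟩, hw⟩, fun hw => hw.2⟩
      have hdouble : ∑ e ∈ A₂, (t e).card
          = ∑ w ∈ A₂.biUnion t, (A₂.filter (fun e => w ∈ t e)).card := by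
        calc ∑ e ∈ A₂, (t e).card
            = ∑ e ∈ A₂, ∑ w ∈ A₂.biUnion t, (if w ∈ t e then 1 else 0) := by
              apply Finset.sum_congr rfl
              intro e he
              rw [hcount e he, Finset.card_filter]
          _ = ∑ w ∈ A₂.biUnion t, ∑ e ∈ A₂, (if w ∈ t e then 1 else 0) := Finset.sum_comm
          _ = ∑ w ∈ A₂.biUnion t, (A₂.filter (fun e => w ∈ t e)).card := by
              apply Finset.sum_congr rfl
              intro w _
              rw [Finset.card_filter]
      have hperw : ∀ w : V, (A₂.filter (fun e => w ∈ t e)).card ≤ 2 := by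
        intro w
        have hinj' : (A₂.filter (fun e => w ∈ t e)).card
            ≤ ((Finset.univ \ S).filter (fun e => w ∈ claimF G S c e)).card := by
          apply Finset.card_le_card_of_injOn Subtype.val
          · intro a ha
            rw [Finset.mem_coe, Finset.mem_filter] at ha ⊢
            exact ⟨a.2, ha.2⟩
          · intro a _ b _ q
            exact Subtype.ext q
        exact le_trans hinj' (claimers_le_two G hG hc hmax w)
      have hlow : ∀ e ∈ A₂, 2 ≤ (t e).card := by
        intro e he
        rw [hA₂, Finset.mem_filter] at he
        omega
      have hL : 2 * A₂.card ≤ ∑ e ∈ A₂, (t e).card := by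
        calc 2 * A₂.card = ∑ _e ∈ A₂, 2 := by rw [Finset.sum_const, smul_eq_mul, mul_comm]
          _ ≤ ∑ e ∈ A₂, (t e).card := Finset.sum_le_sum hlow
      have hR : ∑ w ∈ A₂.biUnion t, (A₂.filter (fun e => w ∈ t e)).card
          ≤ 2 * (A₂.biUnion t).card := by
        calc ∑ w ∈ A₂.biUnion t, (A₂.filter (fun e => w ∈ t e)).card
            ≤ ∑ _w ∈ A₂.biUnion t, 2 := Finset.sum_le_sum (fun w _ => hperw w)
          _ = 2 * (A₂.biUnion t).card := by rw [Finset.sum_const, smul_eq_mul, mul_comm]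
      omega
    have hsplitA : A₁.card + A₂.card = A.card :=
      Finset.card_filter_add_card_filter_not _
    have huni : (A₁.biUnion t) ∪ (A₂.biUnion t) ⊆ A.biUnion t := by
      apply Finset.union_subset <;>
        exact Finset.biUnion_subset_biUnion_of_subset_left t (Finset.filter_subset _ _)
    have hcardu := Finset.card_le_card huni
    rw [Finset.card_union_of_disjoint hdisj] at hcardu
    omega
  obtain ⟨F, hFinj, hFmem⟩ := (Finset.all_card_le_biUnion_card_iff_exists_injective t).mp hhall
  have hFfull : ∀ a : {e // e ∈ U}, F a ∈ fullSet G S := by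
    intro a
    rw [mem_fullSet]
    exact claim_full G hG hc hmax hlex (hFmem a)
  have hcard : (Finset.univ : Finset {e // e ∈ U}).card ≤ (fullSet G S).card :=
    Finset.card_le_card_of_injOn F (fun a _ => hFfull a) (fun a _ b _ q => hFinj q)
  rw [Finset.card_univ, Fintype.card_coe] at hcard
  exact hcard

lemma main_count (hG : G.IsCubic) {S : Finset E} {c : E → Fin 3}
    (hc : G.IsProperColoring ↑S c)
    (hmax : ∀ T : Finset E, G.Colorable 3 ↑T → T.card ≤ S.card)
    (hlex : ∀ T : Finset E, G.Colorable 3 ↑T → T.card = S.card →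
      (fullSet G T).card ≤ (fullSet G S).card) :
    7 * Fintype.card V ≤ 6 * S.card := by
  classical
  have hand : ∑ v : V, (edgesAt G S v).card = 2 * S.card := handshake G S
  have hand3 : ∑ v : V, (edgesAt G Finset.univ v).card = 2 * (Finset.univ : Finset E).card :=
    handshake G Finset.univ
  have hEdge : 3 * Fintype.card V = 2 * Fintype.card E := by
    have : ∑ v : V, (edgesAt G Finset.univ v).card = ∑ _v : V, 3 :=
      Finset.sum_congr rfl (fun v _ => edgesAt_univ_card G hG v)
    rw [this, Finset.sum_const, smul_eq_mul, Finset.card_univ, mul_comm] at hand3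
    rw [hand3, Finset.card_univ]
  have hdegs : ∀ v : V, (edgesAt G S v).card = 2 + (if v ∈ fullSet G S then 1 else 0) := by
    intro v
    have hlo := min_degree_two G hG hc hmax v
    have hhi := edgesAt_card_le G hG S v
    by_cases hfull : v ∈ fullSet G S
    · rw [if_pos hfull]
      rw [mem_fullSet] at hfull
      omega
    · rw [if_neg hfull]
      rw [mem_fullSet] at hfull
      omega
  have hsum : 2 * S.card = 2 * Fintype.card V + (fullSet G S).card := by
    rw [← hand]
    have h1 : ∑ v : V, (edgesAt G S v).card
        = ∑ v : V, (2 + (if v ∈ fullSet G S then 1 else 0)) :=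
      Finset.sum_congr rfl (fun v _ => hdegs v)
    rw [h1, Finset.sum_add_distrib, Finset.sum_const, smul_eq_mul, Finset.card_univ, mul_comm]
    congr 1
    rw [← Finset.card_filter]
    congr 1
    ext v
    rw [Finset.mem_filter]
    simp
  have hm : (Finset.univ \ S).card = Fintype.card E - S.card := by
    rw [Finset.card_sdiff_of_subset (Finset.subset_univ S), Finset.card_univ]
  have hmle : (Finset.univ \ S).card ≤ (fullSet G S).card :=
    uncovered_le_full G hG hc hmax hlex
  have hSle : S.card ≤ Fintype.card E := by
    rw [← Finset.card_univ]
    exact Finset.card_le_card (Finset.subset_univ S)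
  omega

end NuAux

/-- For every cubic graph `G`, `ν₃(G) ≥ (7/6)·|V(G)|`. -/
theorem nu_three_ge_seven_sixths
    {V E : Type} [Fintype V] [Fintype E] (G : Multigraph V E) (hG : G.IsCubic) :
    (G.nu 3 : ℚ) ≥ (7 / 6 : ℚ) * (Fintype.card V : ℚ) := by
  classical
  open NuAux in
  have hAdef : G.nu 3 = sSup {n : ℕ | ∃ S : Set E, G.Colorable 3 S ∧ S.ncard = n} := rfl
  set A := {n : ℕ | ∃ S : Set E, G.Colorable 3 S ∧ S.ncard = n} with hA
  have hbdd : BddAbove A := by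
    refine ⟨Fintype.card E, ?_⟩
    rintro n ⟨S, _, rfl⟩
    exact le_trans (Set.ncard_le_ncard (Set.subset_univ S) Set.finite_univ)
      (le_of_eq (by rw [Set.ncard_univ, Nat.card_eq_fintype_card]))
  have hne : A.Nonempty := by
    refine ⟨0, ∅, ⟨fun _ => 0, ?_⟩, by simp⟩
    intro e he
    exact absurd he (Set.notMem_empty e)
  have hν : G.nu 3 ∈ A := by
    rw [hAdef]
    exact Nat.sSup_mem hne hbdd
  obtain ⟨S₀, hS₀col, hS₀card⟩ := hν
  set S₀' : Finset E := (Set.toFinite S₀).toFinset with hS₀'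
  have hS₀coe : ↑S₀' = S₀ := Set.Finite.coe_toFinset _
  set 𝒮 := (Finset.univ : Finset (Finset E)).filter
    (fun T : Finset E => G.Colorable 3 (↑T : Set E) ∧ T.card = G.nu 3) with h𝒮
  have h𝒮ne : S₀' ∈ 𝒮 := by
    rw [h𝒮, Finset.mem_filter]
    refine ⟨Finset.mem_univ _, by rw [hS₀coe]; exact hS₀col, ?_⟩
    rw [← Set.ncard_coe_finset, hS₀coe]
    exact hS₀card
  obtain ⟨S, hS𝒮, hSmax⟩ := Finset.exists_max_image 𝒮 (fun T => (fullSet G T).card) ⟨S₀', h𝒮ne⟩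
  rw [h𝒮, Finset.mem_filter] at hS𝒮
  obtain ⟨-, hScol, hScard⟩ := hS𝒮
  obtain ⟨c, hc⟩ := hScol
  have hmax : ∀ T : Finset E, G.Colorable 3 ↑T → T.card ≤ S.card := by
    intro T hT
    have hmem : (↑T : Set E).ncard ∈ A := ⟨↑T, hT, rfl⟩
    have hle := le_csSup hbdd hmem
    rw [Set.ncard_coe_finset] at hle
    rw [hScard, hAdef]
    exact hle
  have hlex : ∀ T : Finset E, G.Colorable 3 ↑T → T.card = S.card →
      (fullSet G T).card ≤ (fullSet G S).card := by
    intro T hT hTcard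
    apply hSmax
    rw [h𝒮, Finset.mem_filter]
    exact ⟨Finset.mem_univ _, hT, by rw [hTcard, hScard]⟩
  have hcount := main_count G hG hc hmax hlex
  rw [hScard] at hcount
  have hq : (7 : ℚ) * (Fintype.card V : ℚ) ≤ 6 * (G.nu 3 : ℚ) := by exact_mod_cast hcount
  rw [ge_iff_le]
  linarith
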